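/- arXiv:1106.4770 — 3 statements merged into one kernel-verified Lean document; each statement's English description precedes it below -/
import Mathlib

section
/- Let 1 ≤ m ≤ n−3, and let 0 ≤ p ≤ m and 0 ≤ q ≤ n satisfy m+1 ≤ p+q ≤ n−2. Then Sylv^{p,q}(A,B) = 0. -/
open Polynomial Finset

noncomputable section

variable {F : Type*} [Field F]

/-- Coefficient of a polynomial at an integer index (0 for negative indices). -/
def coeffZ (f : F[X]) (z : ℤ) : F := if 0 ≤ z then f.coeff z.toNat else 0

/-- The `(m+n-2k) × (m+n-2k)` matrix `M_k(f,g)` whose determinant is the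
`k`-th subresultant of `f` (of degree `m`) and `g` (of degree `n`). -/
def sresM (m n k : ℕ) (f g : F[X]) :
    Matrix (Fin (m + n - 2*k)) (Fin (m + n - 2*k)) F[X] := fun i j =>
  if (j : ℕ) = m + n - 2*k - 1 then
    if (i : ℕ) < n - k then X ^ (n - k - 1 - (i : ℕ)) * f
    else X ^ (m - k - 1 - ((i : ℕ) - (n - k))) * g
  else
    if (i : ℕ) < n - k then C (coeffZ f ((m : ℤ) + (i : ℕ) - (j : ℕ)))
    else C (coeffZ g ((k : ℤ) + (i : ℕ) - (j : ℕ)))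

/-- `M_k(f,g)` with the last column replaced by `(x^{n-k-1},…,x^0,0,…,0)ᵀ`. -/
def sresMF (m n k : ℕ) (f g : F[X]) :
    Matrix (Fin (m + n - 2*k)) (Fin (m + n - 2*k)) F[X] := fun i j =>
  if (j : ℕ) = m + n - 2*k - 1 then
    if (i : ℕ) < n - k then X ^ (n - k - 1 - (i : ℕ)) else 0
  else sresM m n k f g i j

/-- `M_k(f,g)` with the last column replaced by `(0,…,0,x^{m-k-1},…,x^0)ᵀ`. -/
def sresMG (m n k : ℕ) (f g : F[X]) :
    Matrix (Fin (m + n - 2*k)) (Fin (m + n - 2*k)) F[X] := fun i j =>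
  if (j : ℕ) = m + n - 2*k - 1 then
    if (i : ℕ) < n - k then 0 else X ^ (m - k - 1 - ((i : ℕ) - (n - k)))
  else sresM m n k f g i j

/-- The `k`-th subresultant `Sres_k(f,g)` w.r.t. degrees `m`, `n`. -/
def Sres (m n k : ℕ) (f g : F[X]) : F[X] := (sresM m n k f g).det

/-- The polynomial `F_k(f,g)` w.r.t. degrees `m`, `n`. -/
def Fk (m n k : ℕ) (f g : F[X]) : F[X] := (sresMF m n k f g).det

/-- The polynomial `G_k(f,g)` w.r.t. degrees `m`, `n`. -/
def Gk (m n k : ℕ) (f g : F[X]) : F[X] := (sresMG m n k f g).det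

/-- `R(Y,Z) = ∏_{y ∈ Y, z ∈ Z} (y - z)`. -/
def Rp {ι κ : Type*} (a : ι → F) (b : κ → F) (S : Finset ι) (T : Finset κ) : F :=
  ∏ i ∈ S, ∏ j ∈ T, (a i - b j)

/-- `R(x,Y) = ∏_{y ∈ Y} (x - y)` as a polynomial. -/
def RX {ι : Type*} (a : ι → F) (S : Finset ι) : F[X] :=
  ∏ i ∈ S, (X - C (a i))

/-- Sylvester's double sum `Sylv^{p,q}(A,B)`. -/
def sylv {m n : ℕ} (A : Fin m → F) (B : Fin n → F) (p q : ℕ) : F[X] :=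
  ∑ S ∈ (univ : Finset (Fin m)).powersetCard p,
    ∑ T ∈ (univ : Finset (Fin n)).powersetCard q,
      C ((Rp A B S T * Rp A B Sᶜ Tᶜ) / (Rp A A S Sᶜ * Rp B B T Tᶜ)) *
        (RX A S * RX B T)

end

section sylvAux

open Polynomial Finset

variable {F : Type*} [Field F] {ι κ : Type*}

lemma Rp_swap (a : ι → F) (b : κ → F) (S : Finset ι) (T : Finset κ) :
    Rp a b S T = ∏ j ∈ T, ∏ i ∈ S, (a i - b j) := Finset.prod_comm

lemma Rp_insert_right [DecidableEq κ] (a : ι → F) (b : κ → F) (S : Finset ι)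
    {T : Finset κ} {j : κ} (hj : j ∉ T) :
    Rp a b S (insert j T) = (∏ i ∈ S, (a i - b j)) * Rp a b S T := by
  unfold Rp
  rw [← Finset.prod_mul_distrib]
  exact Finset.prod_congr rfl fun i _ => Finset.prod_insert hj

lemma Rp_insert_left [DecidableEq ι] (a : ι → F) (b : κ → F) {S : Finset ι}
    (T : Finset κ) {i : ι} (hi : i ∉ S) :
    Rp a b (insert i S) T = (∏ j ∈ T, (a i - b j)) * Rp a b S T :=
  Finset.prod_insert hi

lemma Rp_ne_zero {a : ι → F} {b : κ → F} {S : Finset ι} {T : Finset κ}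
    (h : ∀ i ∈ S, ∀ j ∈ T, a i ≠ b j) : Rp a b S T ≠ 0 :=
  Finset.prod_ne_zero_iff.2 fun i hi =>
    Finset.prod_ne_zero_iff.2 fun j hj => sub_ne_zero.2 (h i hi j hj)

lemma RX_eval (a : ι → F) (S : Finset ι) (x : F) :
    (RX a S).eval x = ∏ i ∈ S, (x - a i) := by
  simp [RX, eval_prod]

lemma RX_natDegree_le (a : ι → F) (S : Finset ι) : (RX a S).natDegree ≤ S.card := by
  refine le_trans (Polynomial.natDegree_prod_le S (fun i => X - C (a i))) ?_
  have h : ∑ i ∈ S, (X - C (a i)).natDegree = ∑ _i ∈ S, 1 :=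
    Finset.sum_congr rfl (fun i _ => natDegree_X_sub_C (a i))
  rw [h]; simp

lemma natDegree_C_mul_RX_le (k : F) (a : ι → F) (b : κ → F) (S : Finset ι) (T : Finset κ) :
    (C k * (RX a S * RX b T)).natDegree ≤ S.card + T.card := by
  refine le_trans Polynomial.natDegree_mul_le ?_
  rw [Polynomial.natDegree_C, zero_add]
  refine le_trans Polynomial.natDegree_mul_le ?_
  exact Nat.add_le_add (RX_natDegree_le a S) (RX_natDegree_le b T)

lemma prod_sub_sign [DecidableEq ι] (c : ι → F) (T : Finset ι) (x : F) :
    ∏ i ∈ T, (c i - x) = (-1) ^ T.card * ∏ i ∈ T, (x - c i) := by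
  rw [← Finset.prod_const, ← Finset.prod_mul_distrib]
  exact Finset.prod_congr rfl fun i _ => by ring

lemma prodCX_natDegree (a : ι → F) (S : Finset ι) :
    (∏ i ∈ S, (C (a i) - X)).natDegree = S.card := by
  have h1 : ∀ i : ι, (C (a i) - X) = -(X - C (a i)) := fun i => by ring
  have hne : ∀ i ∈ S, (C (a i) - X) ≠ 0 := fun i _ => by
    rw [h1 i]; exact neg_ne_zero.2 (Polynomial.X_sub_C_ne_zero (a i))
  rw [Polynomial.natDegree_prod _ _ hne,
    Finset.sum_congr rfl (fun i _ => by rw [h1 i, Polynomial.natDegree_neg,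
      Polynomial.natDegree_X_sub_C])]
  simp

lemma sum_powersetCard_split {M : Type*} [AddCommMonoid M] [DecidableEq ι]
    {U : Finset ι} {x : ι} (hx : x ∈ U) (q : ℕ) (f : Finset ι → M) :
    ∑ T ∈ U.powersetCard (q+1), f T
      = (∑ T ∈ (U.erase x).powersetCard (q+1), f T)
        + ∑ T ∈ (U.erase x).powersetCard q, f (insert x T) := by
  conv_lhs => rw [← Finset.insert_erase hx,
    Finset.powersetCard_succ_insert (Finset.notMem_erase x U)]
  rw [Finset.sum_union ?hd, Finset.sum_image ?hi]
  case hd =>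
    rw [Finset.disjoint_right]
    intro T hT1 hT2
    obtain ⟨T', hT', rfl⟩ := Finset.mem_image.1 hT1
    have := (Finset.mem_powersetCard.1 hT2).1 (Finset.mem_insert_self x T')
    exact (Finset.notMem_erase x U) this
  case hi =>
    intro T1 h1 T2 h2 h
    have hx1 : x ∉ T1 := fun hh => (Finset.notMem_erase x U) ((Finset.mem_powersetCard.1 h1).1 hh)
    have hx2 : x ∉ T2 := fun hh => (Finset.notMem_erase x U) ((Finset.mem_powersetCard.1 h2).1 hh)
    rw [← Finset.erase_insert hx1, ← Finset.erase_insert hx2, h]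

lemma key1 (s u v r Qx Px pP pQ : F) (hs0 : s ≠ 0) (hu : u ≠ 0) (hv : v ≠ 0) (hr : r ≠ 0) :
    Qx * ((Px * pP) * pQ / (u * r) * u) + -s * (Px * (pP * (Qx * pQ) / ((s * v) * r) * v)) = 0 := by
  field_simp
  ring_nf

lemma key2 (s v w r pP pQ Qx : F) (hs0 : s ≠ 0) (hv : v ≠ 0) (hr : r ≠ 0) :
    s * (w * v) * (pP * (Qx * pQ) / ((s * v) * r)) = Qx * (pP * pQ / r * w) := by
  field_simp

lemma key3 (v w r Px pP pQ : F) (hw : w ≠ 0) (hr : r ≠ 0) :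
    (w * v) * ((Px * pP) * pQ / (w * r)) = Px * (pP * pQ / r * v) := by
  field_simp

lemma key4 (sp sq eA eB aj pST pSc r1 r2 : F)
    (hsp : sp * sp = 1) (hsq : sq * sq = 1) (heB : eB ≠ 0) (hr1 : r1 ≠ 0) (hr2 : r2 ≠ 0) :
    pST * (aj * pSc) / (r1 * ((sq * eB) * r2)) * (eA * eB)
      = ((sp * sq) * ((sp * eA) * aj)) * (pST * pSc / (r1 * r2)) := by
  have hsq0 : sq ≠ 0 := fun h => by simp [h] at hsq
  field_simp
  linear_combination (-(pST * aj * pSc * eA)) * hsp +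
    (-(pST * aj * pSc * eA * sp * sp)) * hsq

lemma aux_div (a c d : F) : a / (c * d) = 1 / c * (a / d) := by
  rw [div_eq_mul_inv, mul_inv, one_div, div_eq_mul_inv]; ring

variable [DecidableEq ι]

/-- Vanishing of single Sylvester sums. -/
lemma single_sum_eq_zero (c : ι → F) (U : Finset ι)
    (hc : Set.InjOn c ↑U) (q : ℕ) (P Q : F[X])
    (hP : P.natDegree + q < U.card) (hQ : Q.natDegree < q) :
    ∑ T ∈ U.powersetCard q,
      (∏ i ∈ T, P.eval (c i)) * (∏ i ∈ U \ T, Q.eval (c i)) / Rp c c T (U \ T) = 0 := by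
  classical
  obtain ⟨q, rfl⟩ : ∃ q', q = q' + 1 := ⟨q - 1, by omega⟩
  have hcc : ∀ x ∈ U, ∀ y ∈ U, x ≠ y → c x ≠ c y := fun x hx y hy hxy h => hxy (hc hx hy h)
  have hRp : ∀ T W : Finset ι, T ⊆ U → W ⊆ U → Disjoint T W → Rp c c T W ≠ 0 := by
    intro T W hT hW hd
    refine Rp_ne_zero fun i hi j hj => hcc i (hT hi) j (hW hj) ?_
    rintro rfl; exact (Finset.disjoint_left.1 hd hi) hj
  have hUpos : 0 < U.card := by omega
  obtain ⟨z, hzU⟩ := Finset.card_pos.1 hUpos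
  set V := U.erase z with hVdef
  have hVU : V ⊆ U := Finset.erase_subset _ _
  have hzV : z ∉ V := Finset.notMem_erase _ _
  have hVcard : V.card + 1 = U.card := Finset.card_erase_add_one hzU
  have hqV : q + 1 ≤ V.card := by omega
  set κ : Finset ι → F := fun T =>
    (∏ i ∈ T, P.eval (c i)) * (∏ i ∈ V \ T, Q.eval (c i)) / Rp c c T (V \ T) with hκ
  set Φ1 : F[X] := ∑ T ∈ V.powersetCard (q+1), C (κ T) * RX c (V \ T) with hΦ1
  set Φ2 : F[X] := ∑ T ∈ V.powersetCard q, C (κ T) * RX c T with hΦ2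
  have hs0 : ((-1 : F) ^ q) ≠ 0 := pow_ne_zero _ (by norm_num)
  have hs0' : ((-1 : F) ^ (q+1)) ≠ 0 := pow_ne_zero _ (by norm_num)
  have hΨ0 : Q * Φ1 + C ((-1 : F) ^ (q+1)) * (P * Φ2) = 0 := by
    set Ψ : F[X] := Q * Φ1 + C ((-1 : F) ^ (q+1)) * (P * Φ2) with hΨ
    have hdeg : Ψ.natDegree < V.card := by
      have h1 : Φ1.natDegree ≤ V.card - (q+1) := by
        refine Polynomial.natDegree_sum_le_of_forall_le _ _ fun T hT => ?_
        obtain ⟨hTV, hTc⟩ := Finset.mem_powersetCard.1 hT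
        refine le_trans (Polynomial.natDegree_mul_le) ?_
        simp only [Polynomial.natDegree_C, zero_add]
        exact le_trans (RX_natDegree_le c _) (le_of_eq (by rw [Finset.card_sdiff_of_subset hTV, hTc]))
      have h2 : Φ2.natDegree ≤ q := by
        refine Polynomial.natDegree_sum_le_of_forall_le _ _ fun T hT => ?_
        obtain ⟨hTV, hTc⟩ := Finset.mem_powersetCard.1 hT
        refine le_trans (Polynomial.natDegree_mul_le) ?_
        simp only [Polynomial.natDegree_C, zero_add]
        exact le_trans (RX_natDegree_le c _) (le_of_eq hTc)
      have h3 := Polynomial.natDegree_mul_le (p := Q) (q := Φ1)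
      have h4 := Polynomial.natDegree_mul_le (p := C ((-1:F)^(q+1))) (q := P * Φ2)
      have h5 := Polynomial.natDegree_mul_le (p := P) (q := Φ2)
      have h6 : (C ((-1:F)^(q+1))).natDegree = 0 := Polynomial.natDegree_C _
      have h7 := Polynomial.natDegree_add_le (Q * Φ1) (C ((-1:F)^(q+1)) * (P * Φ2))
      rw [← hΨ] at h7
      have h8 : max (Q * Φ1).natDegree ((C ((-1:F)^(q+1)) * (P * Φ2))).natDegree
          ≤ max (Q.natDegree + Φ1.natDegree) ((C ((-1:F)^(q+1))).natDegree + (P * Φ2).natDegree) :=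
        max_le_max h3 h4
      omega
    have hroot : ∀ x ∈ V, Ψ.eval (c x) = 0 := by
      intro x hxV
      have hxU : x ∈ U := hVU hxV
      have e1 : Φ1.eval (c x)
          = ∑ T ∈ (V.erase x).powersetCard q, κ (insert x T) * ∏ i ∈ V \ insert x T, (c x - c i) := by
        rw [hΦ1, Polynomial.eval_finset_sum]
        simp only [Polynomial.eval_mul, Polynomial.eval_C, RX_eval]
        rw [sum_powersetCard_split hxV q (fun T => κ T * ∏ i ∈ V \ T, (c x - c i))]
        have hz : ∑ T ∈ (V.erase x).powersetCard (q+1), κ T * ∏ i ∈ V \ T, (c x - c i) = 0 := by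
          refine Finset.sum_eq_zero fun T hT => ?_
          obtain ⟨hTV, hTc⟩ := Finset.mem_powersetCard.1 hT
          have hxT : x ∈ V \ T := Finset.mem_sdiff.2
            ⟨hxV, fun h => (Finset.notMem_erase x V) (hTV h)⟩
          rw [Finset.prod_eq_zero hxT (by ring), mul_zero]
        rw [hz, zero_add]
      have e2 : Φ2.eval (c x)
          = ∑ T ∈ (V.erase x).powersetCard q, κ T * ∏ i ∈ T, (c x - c i) := by
        rw [hΦ2, Polynomial.eval_finset_sum]
        simp only [Polynomial.eval_mul, Polynomial.eval_C, RX_eval]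
        refine (Finset.sum_subset (Finset.powersetCard_mono (Finset.erase_subset _ _)) ?_).symm
        intro T hT hT'
        obtain ⟨hTV, hTc⟩ := Finset.mem_powersetCard.1 hT
        have hxT : x ∈ T := by
          by_contra hxT
          exact hT' (Finset.mem_powersetCard.2
            ⟨fun i hi => Finset.mem_erase.2 ⟨fun h => hxT (h ▸ hi), hTV hi⟩, hTc⟩)
        rw [Finset.prod_eq_zero hxT (by ring), mul_zero]
      rw [hΨ]
      simp only [Polynomial.eval_add, Polynomial.eval_mul, Polynomial.eval_C]
      rw [e1, e2, Finset.mul_sum, Finset.mul_sum, Finset.mul_sum, ← Finset.sum_add_distrib]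
      refine Finset.sum_eq_zero fun T hT => ?_
      obtain ⟨hTVx, hTc⟩ := Finset.mem_powersetCard.1 hT
      have hxT : x ∉ T := fun h => (Finset.notMem_erase x V) (hTVx h)
      have hTV : T ⊆ V := hTVx.trans (Finset.erase_subset _ _)
      have hTU : T ⊆ U := hTV.trans hVU
      have hxVT : x ∈ V \ T := Finset.mem_sdiff.2 ⟨hxV, hxT⟩
      have hWx : x ∉ V \ insert x T := fun h =>
        (Finset.mem_sdiff.1 h).2 (Finset.mem_insert_self x T)
      have hWU : V \ insert x T ⊆ U := (Finset.sdiff_subset).trans hVU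
      have hVT : V \ T = insert x (V \ insert x T) := by
        rw [Finset.sdiff_insert, Finset.insert_erase hxVT]
      have hκ1 : κ (insert x T)
          = (P.eval (c x) * ∏ i ∈ T, P.eval (c i)) * (∏ i ∈ V \ insert x T, Q.eval (c i))
            / ((∏ i ∈ V \ insert x T, (c x - c i)) * Rp c c T (V \ insert x T)) := by
        simp only [hκ]
        rw [Finset.prod_insert hxT, Rp_insert_left c c (V \ insert x T) hxT]
      have hκ2 : κ T
          = (∏ i ∈ T, P.eval (c i)) * (Q.eval (c x) * ∏ i ∈ V \ insert x T, Q.eval (c i))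
            / (((-1:F)^q * (∏ i ∈ T, (c x - c i))) * Rp c c T (V \ insert x T)) := by
        simp only [hκ]
        rw [hVT, Finset.prod_insert hWx, Rp_insert_right c c T hWx,
          prod_sub_sign c T (c x), hTc]
      have hu : (∏ i ∈ V \ insert x T, (c x - c i)) ≠ 0 :=
        Finset.prod_ne_zero_iff.2 fun i hi =>
          sub_ne_zero.2 (hcc x hxU i (hWU hi) (fun h => hWx (h ▸ hi)))
      have hv : (∏ i ∈ T, (c x - c i)) ≠ 0 :=
        Finset.prod_ne_zero_iff.2 fun i hi =>
          sub_ne_zero.2 (hcc x hxU i (hTU hi) (fun h => hxT (h ▸ hi)))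
      have hr : Rp c c T (V \ insert x T) ≠ 0 :=
        hRp T _ hTU hWU (Finset.disjoint_left.2 fun i hiT hiW =>
          (Finset.mem_sdiff.1 hiW).2 (Finset.mem_insert_of_mem hiT))
      have hpow : ((-1:F))^(q+1) = -((-1:F)^q) := by rw [pow_succ]; ring
      rw [hκ1, hκ2, hpow]
      exact key1 _ _ _ _ _ _ _ _ hs0 hu hv hr
    refine Polynomial.eq_zero_of_natDegree_lt_card_of_eval_eq_zero' Ψ (V.image c) ?_ ?_
    · intro y hy
      obtain ⟨x, hxV, rfl⟩ := Finset.mem_image.1 hy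
      exact hroot x hxV
    · rwa [Finset.card_image_of_injOn (hc.mono (Finset.coe_subset.2 hVU))]
  have eΦ1z : Φ1.eval (c z) = ∑ T ∈ V.powersetCard (q+1), κ T * ∏ i ∈ V \ T, (c z - c i) := by
    rw [hΦ1, Polynomial.eval_finset_sum]
    simp only [Polynomial.eval_mul, Polynomial.eval_C, RX_eval]
  have eΦ2z : Φ2.eval (c z) = ∑ T ∈ V.powersetCard q, κ T * ∏ i ∈ T, (c z - c i) := by
    rw [hΦ2, Polynomial.eval_finset_sum]
    simp only [Polynomial.eval_mul, Polynomial.eval_C, RX_eval]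
  have hz1 : Q.eval (c z) * Φ1.eval (c z)
      + (-1:F)^(q+1) * (P.eval (c z) * Φ2.eval (c z)) = 0 := by
    have h := congrArg (Polynomial.eval (c z)) hΨ0
    simpa only [Polynomial.eval_add, Polynomial.eval_mul, Polynomial.eval_C,
      Polynomial.eval_zero] using h
  have hPd : (∏ i ∈ V, (c z - c i)) ≠ 0 :=
    Finset.prod_ne_zero_iff.2 fun i hi =>
      sub_ne_zero.2 (hcc z hzU i (hVU hi) (fun h => hzV (h ▸ hi)))
  have hM0 : ((-1:F)^(q+1) * ∏ i ∈ V, (c z - c i)) ≠ 0 := mul_ne_zero hs0' hPd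
  rw [sum_powersetCard_split hzU q
    (fun T => (∏ i ∈ T, P.eval (c i)) * (∏ i ∈ U \ T, Q.eval (c i)) / Rp c c T (U \ T))]
  refine (mul_eq_zero.1 ?_).resolve_left hM0
  rw [mul_add, Finset.mul_sum, Finset.mul_sum]
  have hc1 : ∀ T ∈ V.powersetCard (q+1),
      ((-1:F)^(q+1) * ∏ i ∈ V, (c z - c i)) *
        ((∏ i ∈ T, P.eval (c i)) * (∏ i ∈ U \ T, Q.eval (c i)) / Rp c c T (U \ T))
      = Q.eval (c z) * (κ T * ∏ i ∈ V \ T, (c z - c i)) := by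
    intro T hT
    obtain ⟨hTV, hTc⟩ := Finset.mem_powersetCard.1 hT
    have hTU : T ⊆ U := hTV.trans hVU
    have hzT : z ∉ T := fun h => hzV (hTV h)
    have hzVT : z ∉ V \ T := fun h => hzV (Finset.mem_sdiff.1 h).1
    have hUT : U \ T = insert z (V \ T) := by
      ext i
      simp only [Finset.mem_sdiff, Finset.mem_insert, hVdef, Finset.mem_erase]
      constructor
      · rintro ⟨hiU, hiT⟩
        by_cases h : i = z
        · exact Or.inl h
        · exact Or.inr ⟨⟨h, hiU⟩, hiT⟩
      · rintro (rfl | ⟨⟨hiz, hiU⟩, hiT⟩)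
        · exact ⟨hzU, hzT⟩
        · exact ⟨hiU, hiT⟩
    have hv : (∏ i ∈ T, (c z - c i)) ≠ 0 :=
      Finset.prod_ne_zero_iff.2 fun i hi =>
        sub_ne_zero.2 (hcc z hzU i (hTU hi) (fun h => hzT (h ▸ hi)))
    have hr : Rp c c T (V \ T) ≠ 0 :=
      hRp T _ hTU ((Finset.sdiff_subset).trans hVU)
        (Finset.disjoint_left.2 fun i hiT hiW => (Finset.mem_sdiff.1 hiW).2 hiT)
    rw [hUT, Finset.prod_insert hzVT, Rp_insert_right c c T hzVT,
      prod_sub_sign c T (c z), hTc,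
      ← Finset.prod_sdiff hTV, hκ]
    simp only
    exact key2 _ _ _ _ _ _ _ hs0' hv hr
  have hc2 : ∀ T ∈ V.powersetCard q,
      ((-1:F)^(q+1) * ∏ i ∈ V, (c z - c i)) *
        ((∏ i ∈ insert z T, P.eval (c i)) * (∏ i ∈ U \ insert z T, Q.eval (c i))
          / Rp c c (insert z T) (U \ insert z T))
      = (-1:F)^(q+1) * (P.eval (c z) * (κ T * ∏ i ∈ T, (c z - c i))) := by
    intro T hT
    obtain ⟨hTV, hTc⟩ := Finset.mem_powersetCard.1 hT
    have hTU : T ⊆ U := hTV.trans hVU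
    have hzT : z ∉ T := fun h => hzV (hTV h)
    have hUzT : U \ insert z T = V \ T := by
      ext i
      simp only [Finset.mem_sdiff, Finset.mem_insert, hVdef, Finset.mem_erase]
      constructor
      · rintro ⟨hiU, hi⟩
        exact ⟨⟨fun h => hi (Or.inl h), hiU⟩, fun h => hi (Or.inr h)⟩
      · rintro ⟨⟨hiz, hiU⟩, hiT⟩
        exact ⟨hiU, fun h => h.elim hiz hiT⟩
    have hw : (∏ i ∈ V \ T, (c z - c i)) ≠ 0 :=
      Finset.prod_ne_zero_iff.2 fun i hi =>
        sub_ne_zero.2 (hcc z hzU i (hVU (Finset.mem_sdiff.1 hi).1)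
          (fun h => hzV (h ▸ (Finset.mem_sdiff.1 hi).1)))
    have hr : Rp c c T (V \ T) ≠ 0 :=
      hRp T _ hTU ((Finset.sdiff_subset).trans hVU)
        (Finset.disjoint_left.2 fun i hiT hiW => (Finset.mem_sdiff.1 hiW).2 hiT)
    rw [hUzT, Finset.prod_insert hzT, Rp_insert_left c c (V \ T) hzT,
      ← Finset.prod_sdiff hTV, hκ]
    simp only
    rw [mul_assoc]
    rw [key3 _ _ _ _ _ _ hw hr]
  rw [Finset.sum_congr rfl hc1, Finset.sum_congr rfl hc2,
    ← Finset.mul_sum, ← Finset.mul_sum, ← Finset.mul_sum, ← eΦ1z, ← eΦ2z]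
  exact hz1

/-- Vanishing of the generic inner double sums. -/
lemma double_sum_eq_zero {m n : ℕ} (A : Fin m → F) (B : Fin n → F) (U : Finset (Fin n))
    (hB : Set.InjOn B ↑U) (p q : ℕ) (S : Finset (Fin m)) (hScard : S.card = p)
    (h1 : m < p + q) (h2 : p + q < U.card) :
    ∑ T ∈ U.powersetCard q,
      Rp A B S T * Rp A B Sᶜ (U \ T) / (Rp A A S Sᶜ * Rp B B T (U \ T)) = 0 := by
  classical
  set P : F[X] := ∏ s ∈ S, (C (A s) - X) with hP
  set Q : F[X] := ∏ s ∈ Sᶜ, (C (A s) - X) with hQ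
  have hScc : Sᶜ.card = m - p := by
    rw [Finset.card_compl, hScard, Fintype.card_fin]
  have hPdeg : P.natDegree = p := by rw [hP, prodCX_natDegree, hScard]
  have hQdeg : Q.natDegree = m - p := by rw [hQ, prodCX_natDegree, hScc]
  have hp' : p ≤ m := hScard ▸ (Finset.card_le_card (Finset.subset_univ S)).trans
    (le_of_eq (by simp))
  have key := single_sum_eq_zero B U hB q P Q (by omega) (by omega)
  have htrans : ∀ T ∈ U.powersetCard q,
      Rp A B S T * Rp A B Sᶜ (U \ T) / (Rp A A S Sᶜ * Rp B B T (U \ T))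
      = 1 / Rp A A S Sᶜ *
        ((∏ i ∈ T, P.eval (B i)) * (∏ i ∈ U \ T, Q.eval (B i)) / Rp B B T (U \ T)) := by
    intro T hT
    have e1 : ∏ i ∈ T, P.eval (B i) = Rp A B S T := by
      rw [Rp_swap]
      exact Finset.prod_congr rfl fun i _ => by simp [hP, eval_prod]
    have e2 : ∏ i ∈ U \ T, Q.eval (B i) = Rp A B Sᶜ (U \ T) := by
      rw [Rp_swap]
      exact Finset.prod_congr rfl fun i _ => by simp [hQ, eval_prod]
    rw [e1, e2, aux_div]
  rw [Finset.sum_congr rfl htrans, ← Finset.mul_sum, key, mul_zero]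

end sylvAux


open Polynomial Finset in
/-- for `1 ≤ m ≤ n − 3` and `m + 1 ≤ p + q ≤ n − 2`, `Sylv^{p,q}(A,B) = 0`. -/
theorem sylvester_double_sum_eq_zero {F : Type*} [Field F] {m n : ℕ}
    (hm : 1 ≤ m) (hmn : m ≤ n - 3)
    (A : Fin m → F) (B : Fin n → F)
    (hA : Function.Injective A) (hB : Function.Injective B)
    (p q : ℕ) (hp : p ≤ m) (hq : q ≤ n)
    (h1 : m + 1 ≤ p + q) (h2 : p + q ≤ n - 2) :
    sylv A B p q = 0 := by
  classical
  have hn : 4 ≤ n := by omega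
  have hq1 : 1 ≤ q := by omega
  have hsp2 : ((-1:F)^p) * ((-1:F)^p) = 1 := by
    rw [← pow_add]; exact Even.neg_one_pow ⟨p, rfl⟩
  refine Polynomial.eq_zero_of_natDegree_lt_card_of_eval_eq_zero (sylv A B p q) hB ?_ ?_
  · intro j
    have hUcard : (univ.erase j : Finset (Fin n)).card = n - 1 := by
      rw [Finset.card_erase_of_mem (Finset.mem_univ j), Finset.card_univ, Fintype.card_fin]
    have hBU : Set.InjOn B ↑(univ.erase j : Finset (Fin n)) := fun x _ y _ h => hB h
    unfold sylv
    rw [Polynomial.eval_finset_sum]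
    refine Finset.sum_eq_zero fun S hS => ?_
    obtain ⟨hSu, hScard⟩ := Finset.mem_powersetCard.1 hS
    have hr1 : Rp A A S Sᶜ ≠ 0 :=
      Rp_ne_zero fun i hi k hk hik => (Finset.mem_compl.1 hk) ((hA hik) ▸ hi)
    rw [Polynomial.eval_finset_sum]
    obtain ⟨q', rfl⟩ : ∃ q', q = q' + 1 := ⟨q - 1, by omega⟩
    have hsq2 : ((-1:F)^(q'+1)) * ((-1:F)^(q'+1)) = 1 := by
      rw [← pow_add]; exact Even.neg_one_pow ⟨q'+1, rfl⟩
    rw [sum_powersetCard_split (Finset.mem_univ j) q'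
      (fun T => Polynomial.eval (B j)
        (C ((Rp A B S T * Rp A B Sᶜ Tᶜ) / (Rp A A S Sᶜ * Rp B B T Tᶜ)) * (RX A S * RX B T)))]
    have hbl1 : ∑ T ∈ (univ.erase j : Finset (Fin n)).powersetCard (q'+1), Polynomial.eval (B j)
        (C ((Rp A B S T * Rp A B Sᶜ Tᶜ) / (Rp A A S Sᶜ * Rp B B T Tᶜ)) * (RX A S * RX B T))
        = 0 := by
      have hstep := double_sum_eq_zero A B (univ.erase j) hBU p (q'+1) S hScard
        (by omega) (by rw [hUcard]; omega)
      have hpt : ∀ T ∈ (univ.erase j : Finset (Fin n)).powersetCard (q'+1),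
          Polynomial.eval (B j)
            (C ((Rp A B S T * Rp A B Sᶜ Tᶜ) / (Rp A A S Sᶜ * Rp B B T Tᶜ)) * (RX A S * RX B T))
          = ((((-1:F)^p * (-1:F)^(q'+1))) *
              (((-1:F)^p * ∏ i ∈ S, (B j - A i)) * ∏ i ∈ Sᶜ, (A i - B j))) *
            (Rp A B S T * Rp A B Sᶜ ((univ.erase j : Finset (Fin n)) \ T)
              / (Rp A A S Sᶜ * Rp B B T ((univ.erase j : Finset (Fin n)) \ T))) := by
        intro T hT
        obtain ⟨hTU, hTcard⟩ := Finset.mem_powersetCard.1 hT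
        have hjT : j ∉ T := fun h => (Finset.notMem_erase j univ) (hTU h)
        have hjUT : j ∉ (univ.erase j : Finset (Fin n)) \ T :=
          fun h => (Finset.notMem_erase j univ) (Finset.mem_sdiff.1 h).1
        have hTc : Tᶜ = insert j ((univ.erase j : Finset (Fin n)) \ T) := by
          ext i
          by_cases h : i = j
          · subst h; simp [Finset.mem_compl, hjT]
          · simp [Finset.mem_compl, Finset.mem_insert, Finset.mem_sdiff, Finset.mem_erase, h]
        have heB : (∏ i ∈ T, (B j - B i)) ≠ 0 :=
          Finset.prod_ne_zero_iff.2 fun i hi => sub_ne_zero.2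
            (fun h => hjT ((hB h) ▸ hi))
        have hr2 : Rp B B T ((univ.erase j : Finset (Fin n)) \ T) ≠ 0 :=
          Rp_ne_zero fun a ha b hbb hab => ((Finset.mem_sdiff.1 hbb).2) ((hB hab) ▸ ha)
        rw [Polynomial.eval_mul, Polynomial.eval_C, Polynomial.eval_mul, RX_eval, RX_eval,
          hTc, Rp_insert_right A B Sᶜ hjUT, Rp_insert_right B B T hjUT,
          prod_sub_sign B T (B j), hTcard]
        exact key4 _ _ _ _ _ _ _ _ _ hsp2 hsq2 heB hr1 hr2
      rw [Finset.sum_congr rfl hpt, ← Finset.mul_sum, hstep, mul_zero]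
    have hbl2 : ∑ T ∈ (univ.erase j : Finset (Fin n)).powersetCard q', Polynomial.eval (B j)
        (C ((Rp A B S (insert j T) * Rp A B Sᶜ (insert j T)ᶜ) /
          (Rp A A S Sᶜ * Rp B B (insert j T) (insert j T)ᶜ)) *
          (RX A S * RX B (insert j T))) = 0 := by
      refine Finset.sum_eq_zero fun T hT => ?_
      have hz : (RX B (insert j T)).eval (B j) = 0 := by
        rw [RX_eval]
        exact Finset.prod_eq_zero (Finset.mem_insert_self j T) (sub_self _)
      simp [Polynomial.eval_mul, hz]
    rw [hbl1, hbl2, add_zero]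
  · rw [Fintype.card_fin]
    have hdeg : (sylv A B p q).natDegree ≤ p + q := by
      unfold sylv
      refine Polynomial.natDegree_sum_le_of_forall_le _ _ fun S hS => ?_
      obtain ⟨_, hScard⟩ := Finset.mem_powersetCard.1 hS
      refine Polynomial.natDegree_sum_le_of_forall_le _ _ fun T hT => ?_
      obtain ⟨_, hTcard⟩ := Finset.mem_powersetCard.1 hT
      refine le_trans (natDegree_C_mul_RX_le _ _ _ _ _) ?_
      rw [hScard, hTcard]
    omega
end

section
/- Let 1 ≤ k ≤ min(m,n)−1 and let α be an entry of A (a root of f). Then G_k(f,g) evaluated at α equals (−1)^{m−k−1} · coeff_{m−k−1}( G_{k−1}(f/(x−α), g) ), where f/(x−α) is the exact quotient (monic of degree m−1), G_{k−1}(f/(x−α), g) is formed with respect to degrees m−1 and n, and coeff_{m−k−1} denotes the coefficient of x^{m−k−1}. -/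
open Polynomial Finset

section Helper
variable {F : Type*} [Field F]

lemma tele_aux (α : F) (Cf : ℤ → F) (i : ℤ) (j : ℕ) :
    ∑ t ∈ Finset.range (j+1), α^(j-t) * (Cf (i-t) - α * Cf (i-t+1))
      = Cf (i-j) - α^(j+1) * Cf (i+1) := by
  induction j with
  | zero => simp
  | succ j ih =>
    rw [Finset.sum_range_succ]
    have h1 : ∀ t ∈ Finset.range (j+1), α^(j+1-t) * (Cf (i-t) - α * Cf (i-t+1))
        = α * (α^(j-t) * (Cf (i-t) - α * Cf (i-t+1))) := by
      intro t ht
      rw [Finset.mem_range] at ht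
      have h : j+1-t = (j-t)+1 := by omega
      rw [h, pow_succ]
      ring
    rw [Finset.sum_congr rfl h1, ← Finset.mul_sum, ih]
    simp only [Nat.sub_self, pow_zero, one_mul]
    push_cast
    ring

lemma sum_ite_le {M : Type*} [AddCommMonoid M] (N jj : ℕ) (hj : jj < N) (g : ℕ → M) :
    ∑ t ∈ Finset.range N, (if t ≤ jj then g t else 0) = ∑ t ∈ Finset.range (jj+1), g t := by
  rw [← Finset.sum_subset (Finset.range_subset_range.2 (by omega : jj+1 ≤ N))
      (fun x _ hx => by rw [Finset.mem_range] at hx; rw [if_neg (by omega)])]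
  exact Finset.sum_congr rfl fun x hx => by rw [Finset.mem_range] at hx; rw [if_pos (by omega)]

lemma core1 (P Q : ℕ) (α : F) (Aa Bb : ℤ → F)
    (hA0 : ∀ v : ℤ, 0 < v → Aa v = 0) (hB0 : ∀ v : ℤ, 0 < v → Bb v = 0) :
    (Matrix.of fun i j : Fin (P+Q+2) =>
        if (j:ℕ) = P+Q+1 then (if (i:ℕ) < P+1 then 0 else α^(P+Q+1-(i:ℕ)))
        else if (i:ℕ) < P+1 then
          (Aa (((i:ℕ):ℤ)-((j:ℕ):ℤ)) - α * Aa ((((i:ℕ):ℤ)-((j:ℕ):ℤ))+1))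
        else Bb (((i:ℕ):ℤ)-((j:ℕ):ℤ)-(P+1))).det
    = (Matrix.of fun i j : Fin (P+Q+1) =>
        if (i:ℕ) < P+1 then Aa (((i:ℕ):ℤ)-((j:ℕ):ℤ))
        else Bb (((i:ℕ):ℤ)-((j:ℕ):ℤ)-(P+1))).det := by
  set Mae : Matrix (Fin (P+Q+2)) (Fin (P+Q+2)) F := Matrix.of fun i j =>
        if (j:ℕ) = P+Q+1 then (if (i:ℕ) < P+1 then 0 else α^(P+Q+1-(i:ℕ)))
        else if (i:ℕ) < P+1 then
          (Aa (((i:ℕ):ℤ)-((j:ℕ):ℤ)) - α * Aa ((((i:ℕ):ℤ)-((j:ℕ):ℤ))+1))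
        else Bb (((i:ℕ):ℤ)-((j:ℕ):ℤ)-(P+1)) with hMae
  set M5 : Matrix (Fin (P+Q+1)) (Fin (P+Q+1)) F := Matrix.of fun i j =>
        if (i:ℕ) < P+1 then Aa (((i:ℕ):ℤ)-((j:ℕ):ℤ))
        else Bb (((i:ℕ):ℤ)-((j:ℕ):ℤ)-(P+1)) with hM5
  set U : Matrix (Fin (P+Q+2)) (Fin (P+Q+2)) F := Matrix.of fun t j =>
        if (j:ℕ) = P+Q+1 then (if (t:ℕ) = (j:ℕ) then 1 else 0)
        else if (t:ℕ) ≤ (j:ℕ) then α^((j:ℕ)-(t:ℕ)) else 0 with hU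
  set L : Matrix (Fin (P+Q+2)) (Fin (P+Q+2)) F := Matrix.of fun i t =>
        (if (i:ℕ) = (t:ℕ) then 1 else 0)
        + (if ((t:ℕ) = (i:ℕ)+1 ∧ P+1 ≤ (i:ℕ) ∧ (i:ℕ) ≤ P+Q) then -α else 0) with hL
  set M2 : Matrix (Fin (P+Q+2)) (Fin (P+Q+2)) F := Matrix.of fun i j =>
        if (j:ℕ) = P+Q+1 then (if (i:ℕ) < P+1 then 0 else α^(P+Q+1-(i:ℕ)))
        else if (i:ℕ) < P+1 then Aa (((i:ℕ):ℤ)-((j:ℕ):ℤ))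
        else ∑ t ∈ Finset.range ((j:ℕ)+1), α^((j:ℕ)-t) * Bb (((i:ℕ):ℤ)-(t:ℤ)-(P+1)) with hM2
  set M4 : Matrix (Fin (P+Q+2)) (Fin (P+Q+2)) F := Matrix.of fun i j =>
        if (j:ℕ) = P+Q+1 then (if (i:ℕ) = P+Q+1 then 1 else 0)
        else if (i:ℕ) < P+1 then Aa (((i:ℕ):ℤ)-((j:ℕ):ℤ))
        else if (i:ℕ) ≤ P+Q then Bb (((i:ℕ):ℤ)-((j:ℕ):ℤ)-(P+1))
        else ∑ t ∈ Finset.range ((j:ℕ)+1), α^((j:ℕ)-t) * Bb (((i:ℕ):ℤ)-(t:ℤ)-(P+1)) with hM4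
  -- U is upper triangular with unit diagonal
  have hUdet : U.det = 1 := by
    rw [Matrix.det_of_upperTriangular]
    · refine Finset.prod_eq_one fun t _ => ?_
      by_cases ht : (t:ℕ) = P+Q+1 <;> simp [hU, ht]
    · intro i j hij
      have hij' : (j:ℕ) < (i:ℕ) := hij
      have hi := i.isLt
      simp only [hU, Matrix.of_apply]
      rw [if_neg (by omega), if_neg (by omega)]
  have hLdet : L.det = 1 := by
    rw [Matrix.det_of_upperTriangular]
    · refine Finset.prod_eq_one fun t _ => ?_
      simp [hL]
    · intro i j hij
      have hij' : (j:ℕ) < (i:ℕ) := hij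
      simp only [hL, Matrix.of_apply]
      rw [if_neg (by omega), if_neg (by omega), add_zero]
  -- Mae * U = M2
  have h1 : Mae * U = M2 := by
    ext i j
    rw [Matrix.mul_apply]
    by_cases hj : (j:ℕ) = P+Q+1
    · have hjj : ∀ t : Fin (P+Q+2), U t j = if t = j then 1 else 0 := by
        intro t
        simp only [hU, Matrix.of_apply, if_pos hj]
        by_cases ht : t = j
        · rw [if_pos (by rw [ht]), if_pos ht]
        · rw [if_neg (fun h => ht (Fin.ext h)), if_neg ht]
      simp only [hjj, mul_ite, mul_one, mul_zero]
      rw [Finset.sum_ite_eq' _ j (fun t => Mae i t)]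
      simp [hM2, hMae, hj]
    · have hjlt : (j:ℕ) < P+Q+1 := by have := j.isLt; omega
      have e1 : ∀ t : Fin (P+Q+2), Mae i t * U t j
          = (if (t:ℕ) ≤ (j:ℕ) then
              (if (i:ℕ) < P+1 then
                (Aa (((i:ℕ):ℤ)-((t:ℕ):ℤ)) - α * Aa ((((i:ℕ):ℤ)-((t:ℕ):ℤ))+1))
               else Bb (((i:ℕ):ℤ)-((t:ℕ):ℤ)-(P+1))) * α^((j:ℕ)-(t:ℕ))
             else 0) := by
        intro t
        by_cases ht : (t:ℕ) ≤ (j:ℕ)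
        · rw [if_pos ht]
          simp only [hMae, hU, Matrix.of_apply]
          rw [if_neg (by omega), if_neg hj, if_pos ht]
        · rw [if_neg ht]
          simp only [hU, Matrix.of_apply]
          rw [if_neg hj, if_neg ht, mul_zero]
      rw [Finset.sum_congr rfl (fun t _ => e1 t)]
      rw [Fin.sum_univ_eq_sum_range (fun t => if t ≤ (j:ℕ) then
              (if (i:ℕ) < P+1 then
                (Aa (((i:ℕ):ℤ)-(t:ℤ)) - α * Aa ((((i:ℕ):ℤ)-(t:ℤ))+1))
               else Bb (((i:ℕ):ℤ)-(t:ℤ)-(P+1))) * α^((j:ℕ)-t)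
             else 0) (P+Q+2)]
      rw [sum_ite_le (P+Q+2) (j:ℕ) (by omega)]
      by_cases hi : (i:ℕ) < P+1
      · simp only [if_pos hi]
        have := tele_aux α Aa ((i:ℕ):ℤ) (j:ℕ)
        rw [Finset.sum_congr rfl (fun t _ => mul_comm _ (α^((j:ℕ)-t))), this]
        rw [hA0 (((i:ℕ):ℤ)+1) (by positivity)]
        simp [hM2, hMae, hj, hi]
        intro h; exact absurd h (by omega)
      · simp only [if_neg hi]
        rw [Finset.sum_congr rfl (fun t _ => mul_comm _ (α^((j:ℕ)-t)))]
        simp only [hM2, Matrix.of_apply]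
        rw [if_neg hj, if_neg hi]
  -- L * M2 = M4
  have h2 : L * M2 = M4 := by
    ext i j
    rw [Matrix.mul_apply]
    have hsplit : ∀ t : Fin (P+Q+2), L i t * M2 t j
        = (if i = t then M2 t j else 0)
          + (if ((t:ℕ) = (i:ℕ)+1 ∧ P+1 ≤ (i:ℕ) ∧ (i:ℕ) ≤ P+Q) then -α * M2 t j else 0) := by
      intro t
      simp only [hL, Matrix.of_apply, add_mul]
      congr 1
      · by_cases ht : i = t
        · rw [if_pos (by rw [ht]), if_pos ht, one_mul]
        · rw [if_neg (fun h => ht (Fin.ext h)), if_neg ht, zero_mul]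
      · by_cases ht : ((t:ℕ) = (i:ℕ)+1 ∧ P+1 ≤ (i:ℕ) ∧ (i:ℕ) ≤ P+Q)
        · rw [if_pos ht, if_pos ht]
        · rw [if_neg ht, if_neg ht, zero_mul]
    rw [Finset.sum_congr rfl (fun t _ => hsplit t), Finset.sum_add_distrib]
    rw [Finset.sum_ite_eq _ i (fun t => M2 t j) ]
    simp only [Finset.mem_univ, if_pos]
    by_cases hcond : P+1 ≤ (i:ℕ) ∧ (i:ℕ) ≤ P+Q
    · have hii : (i:ℕ)+1 < P+Q+2 := by omega
      set i' : Fin (P+Q+2) := ⟨(i:ℕ)+1, hii⟩ with hi'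
      have e2 : ∀ t : Fin (P+Q+2), ((t:ℕ) = (i:ℕ)+1 ∧ P+1 ≤ (i:ℕ) ∧ (i:ℕ) ≤ P+Q) ↔ t = i' := by
        intro t
        constructor
        · intro h; exact Fin.ext (by simp [hi', h.1])
        · intro h; exact ⟨by simp [h, hi'], hcond⟩
      simp only [e2]
      rw [Finset.sum_ite_eq' _ i' (fun t => -α * M2 t j)]
      simp only [Finset.mem_univ, if_pos]
      -- now compute M2 i j + (-α) * M2 i' j = M4 i j
      by_cases hj : (j:ℕ) = P+Q+1
      · simp only [hM2, hM4, Matrix.of_apply, if_pos hj, hi']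
        rw [if_neg (by omega), if_neg (by omega), if_neg (by omega)]
        have ha : P+Q+1-(i:ℕ) = (P+Q+1-((i:ℕ)+1))+1 := by omega
        rw [ha, pow_succ]
        ring
      · simp only [hM2, hM4, Matrix.of_apply, if_neg hj, hi']
        rw [if_neg (by omega), if_neg (by omega), if_neg (by omega), if_pos (by omega)]
        rw [neg_mul, Finset.mul_sum, ← sub_eq_add_neg, ← Finset.sum_sub_distrib]
        have comb2 : ∑ t ∈ Finset.range ((j:ℕ)+1),
            (α^((j:ℕ)-t) * Bb (((i:ℕ):ℤ)-(t:ℤ)-(P+1))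
              - α * (α^((j:ℕ)-t) * Bb ((((i:ℕ)+1:ℕ):ℤ)-(t:ℤ)-(P+1))))
            = ∑ t ∈ Finset.range ((j:ℕ)+1),
              α^((j:ℕ)-t) * ((fun v : ℤ => Bb (v - (P+1))) (((i:ℕ):ℤ)-(t:ℤ))
                - α * (fun v : ℤ => Bb (v - (P+1))) ((((i:ℕ):ℤ)-(t:ℤ))+1)) := by
          refine Finset.sum_congr rfl fun t _ => ?_
          simp only
          push_cast
          ring
        rw [comb2, tele_aux α (fun v : ℤ => Bb (v - (P+1))) (((i:ℕ):ℤ)) (j:ℕ)]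
        rw [hB0 ((((i:ℕ):ℤ))+1-(P+1)) (by push_cast; omega), mul_zero, sub_zero]
    · have e3 : ∀ t : Fin (P+Q+2),
          (if ((t:ℕ) = (i:ℕ)+1 ∧ P+1 ≤ (i:ℕ) ∧ (i:ℕ) ≤ P+Q) then -α * M2 t j else 0) = 0 := by
        intro t
        rw [if_neg (fun h => hcond ⟨h.2.1, h.2.2⟩)]
      rw [Finset.sum_congr rfl (fun t _ => e3 t), Finset.sum_const_zero, add_zero]
      -- i < P+1 or i = P+Q+1
      have hi2 : (i:ℕ) < P+1 ∨ (i:ℕ) = P+Q+1 := by have := i.isLt; omega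
      by_cases hj : (j:ℕ) = P+Q+1
      · simp only [hM2, hM4, Matrix.of_apply, if_pos hj]
        rcases hi2 with h | h
        · rw [if_pos h, if_neg (by omega)]
        · rw [if_neg (by omega), if_pos h, h]
          simp
      · simp only [hM2, hM4, Matrix.of_apply, if_neg hj]
        rcases hi2 with h | h
        · rw [if_pos h, if_pos h]
        · rw [if_neg (by omega), if_neg (by omega), if_neg (by omega)]
  have hdet : Mae.det = M4.det := by
    have hLMU : L * (Mae * U) = M4 := by rw [h1, h2]
    calc Mae.det = L.det * (Mae.det * U.det) := by rw [hLdet, hUdet]; ring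
    _ = (L * (Mae * U)).det := by rw [Matrix.det_mul, Matrix.det_mul]
    _ = M4.det := by rw [hLMU]
  rw [hdet]
  have hexp := Matrix.det_succ_column (n := P+Q+1) M4 (Fin.last (P+Q+1))
  rw [hexp, Finset.sum_eq_single (Fin.last (P+Q+1))]
  · have hlast : M4 (Fin.last (P+Q+1)) (Fin.last (P+Q+1)) = 1 := by
      simp only [hM4, Matrix.of_apply, Fin.val_last]
      simp
    rw [hlast, mul_one]
    have hsgn : ((-1 : F)) ^ ((Fin.last (P+Q+1) : ℕ) + (Fin.last (P+Q+1) : ℕ)) = 1 :=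
      Even.neg_one_pow ⟨(Fin.last (P+Q+1) : ℕ), by omega⟩
    rw [hsgn, one_mul]
    congr 1
    ext i j
    simp only [Matrix.submatrix_apply, Fin.succAbove_last, hM4, hM5, Matrix.of_apply,
      Fin.coe_castSucc]
    have hjb := j.isLt
    have hib := i.isLt
    rw [if_neg (by omega)]
    by_cases hi : (i:ℕ) < P+1
    · rw [if_pos hi, if_pos hi]
    · rw [if_neg hi, if_neg hi, if_pos (by omega)]
  · intro t _ ht
    have hne : (t:ℕ) ≠ P+Q+1 := by
      intro h
      exact ht (Fin.ext (by rw [h, Fin.val_last]))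
    have h0 : M4 t (Fin.last (P+Q+1)) = 0 := by
      simp only [hM4, Matrix.of_apply, Fin.val_last]
      simp [hne]
    rw [h0, mul_zero, zero_mul]
  · intro h
    exact absurd (Finset.mem_univ _) h

lemma core2 (P Q : ℕ) (Aa Bb : ℤ → F)
    (hA0 : ∀ v : ℤ, 0 < v → Aa v = 0) (hA1 : Aa 0 = 1)
    (hB0 : ∀ v : ℤ, 0 < v → Bb v = 0) :
    (Matrix.of fun i j : Fin (P+Q+2) =>
        if (i:ℕ) < P+2 then Aa (((i:ℕ):ℤ)-((j:ℕ):ℤ))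
        else Bb (((i:ℕ):ℤ)-((j:ℕ):ℤ)-(P+1))).det
    = (Matrix.of fun i j : Fin (P+Q+1) =>
        if (i:ℕ) < P+1 then Aa (((i:ℕ):ℤ)-((j:ℕ):ℤ))
        else Bb (((i:ℕ):ℤ)-((j:ℕ):ℤ)-(P+1))).det := by
  rw [Matrix.det_succ_column_zero (n := P+Q+1)]
  rw [Finset.sum_eq_single (0 : Fin (P+Q+2))]
  · simp only [Matrix.of_apply, Fin.val_zero, Fin.cast_zero]
    simp only [show (0:ℕ) < P + 2 by omega, ↓reduceIte]
    norm_num [hA1]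
    congr 1
    ext i j
    simp only [Matrix.submatrix_apply, Fin.zero_succAbove, Matrix.of_apply, Fin.val_succ]
    have hib := i.isLt
    by_cases hi : (i:ℕ) < P+1
    · rw [if_pos (by omega), if_pos (by omega : (i:ℕ) ≤ P)]
      congr 1
      push_cast
      ring
    · rw [if_neg (by omega), if_neg (by omega : ¬ (i:ℕ) ≤ P)]
      congr 1
      push_cast
      ring
  · intro t _ ht
    have htpos : 0 < (t:ℕ) := by
      rcases Nat.eq_zero_or_pos (t:ℕ) with h | h
      · exact absurd (Fin.ext h : t = 0) ht
      · exact h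
    have h0 : (Matrix.of fun i j : Fin (P+Q+2) =>
        if (i:ℕ) < P+2 then Aa (((i:ℕ):ℤ)-((j:ℕ):ℤ))
        else Bb (((i:ℕ):ℤ)-((j:ℕ):ℤ)-(P+1))) t 0 = 0 := by
      simp only [Matrix.of_apply, Fin.val_zero]
      by_cases ht2 : (t:ℕ) < P+2
      · rw [if_pos ht2]
        exact hA0 _ (by push_cast; omega)
      · rw [if_neg ht2]
        exact hB0 _ (by push_cast; omega)
    rw [h0, mul_zero, zero_mul]
  · intro h
    exact absurd (Finset.mem_univ _) h

lemma coeff_term_aux (e s : ℕ) (d : F) :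
    (((-1 : F[X])^e) * X^s * C d).coeff Q = if Q = s then (-1:F)^e * d else 0 := by
  have h1 : ((-1 : F[X])^e) = C ((-1:F)^e) := by
    rw [map_pow, map_neg, map_one]
  rw [h1]
  have h2 : C ((-1:F)^e) * X^s * C d = C ((-1:F)^e * d) * X^s := by
    rw [mul_right_comm, ← Polynomial.C_mul]
  rw [h2, Polynomial.coeff_C_mul, Polynomial.coeff_X_pow]
  split_ifs <;> simp

lemma core3 (P Q : ℕ) (Aa Bb : ℤ → F) :
    ((Matrix.of fun i j : Fin (P+Q+3) =>
        if (j:ℕ) = P+Q+2 then (if (i:ℕ) < P+2 then 0 else (X:F[X])^(P+Q+2-(i:ℕ)))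
        else if (i:ℕ) < P+2 then C (Aa (((i:ℕ):ℤ)-((j:ℕ):ℤ)))
        else C (Bb (((i:ℕ):ℤ)-((j:ℕ):ℤ)-(P+2)))).det).coeff Q
    = (-1:F)^Q * (Matrix.of fun i j : Fin (P+Q+2) =>
        if (i:ℕ) < P+2 then Aa (((i:ℕ):ℤ)-((j:ℕ):ℤ))
        else Bb (((i:ℕ):ℤ)-((j:ℕ):ℤ)-(P+1))).det := by
  set Big : Matrix (Fin (P+Q+3)) (Fin (P+Q+3)) F[X] := Matrix.of fun i j =>
        if (j:ℕ) = P+Q+2 then (if (i:ℕ) < P+2 then 0 else (X:F[X])^(P+Q+2-(i:ℕ)))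
        else if (i:ℕ) < P+2 then C (Aa (((i:ℕ):ℤ)-((j:ℕ):ℤ)))
        else C (Bb (((i:ℕ):ℤ)-((j:ℕ):ℤ)-(P+2))) with hBig
  -- every minor along the last column is a constant polynomial
  have hminor : ∀ i : Fin (P+Q+3),
      (Big.submatrix i.succAbove (Fin.last (P+Q+2)).succAbove).det
        = C ((Matrix.of fun r s : Fin (P+Q+2) =>
            if ((i.succAbove r : Fin (P+Q+3)):ℕ) < P+2
            then Aa ((((i.succAbove r):ℕ):ℤ)-((s:ℕ):ℤ))
            else Bb ((((i.succAbove r):ℕ):ℤ)-((s:ℕ):ℤ)-(P+2))).det) := by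
    intro i
    rw [RingHom.map_det]
    congr 1
    ext r s
    simp only [Matrix.submatrix_apply, Fin.succAbove_last, hBig, Matrix.of_apply,
      RingHom.mapMatrix_apply, Matrix.map_apply, Fin.coe_castSucc]
    have hsb := s.isLt
    rw [if_neg (by omega), apply_ite C]
  rw [Matrix.det_succ_column (n := P+Q+2) Big (Fin.last (P+Q+2)), Polynomial.finset_sum_coeff]
  rw [Finset.sum_eq_single (⟨P+2, by omega⟩ : Fin (P+Q+3))]
  · rw [hminor]
    have hent : Big ⟨P+2, by omega⟩ (Fin.last (P+Q+2)) = X^Q := by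
      simp only [hBig, Matrix.of_apply, Fin.val_last]
      rw [if_pos trivial, if_neg (by omega)]
      congr 1
      omega
    rw [hent]
    rw [coeff_term_aux]
    rw [if_pos rfl]
    have hsgn : ((-1:F)) ^ ((⟨P+2, by omega⟩ : Fin (P+Q+3)) + (Fin.last (P+Q+2)) : ℕ)
        = (-1:F)^Q := by
      have : (((⟨P+2, by omega⟩ : Fin (P+Q+3)):ℕ) + ((Fin.last (P+Q+2)):ℕ)) = 2*(P+2)+Q := by
        simp [Fin.val_last]; omega
      rw [this, pow_add, pow_mul]
      norm_num
    rw [hsgn]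
    congr 1
    -- the two F-matrices agree
    congr 1
    ext r s
    simp only [Matrix.of_apply]
    have hrb := r.isLt
    by_cases hr : (r:ℕ) < P+2
    · have hrow : (⟨P+2, by omega⟩ : Fin (P+Q+3)).succAbove r = Fin.castSucc r := by
        apply Fin.succAbove_of_castSucc_lt
        rw [Fin.lt_def]
        simpa using hr
      rw [hrow]
      simp only [Fin.coe_castSucc]
      rw [if_pos hr, if_pos hr]
    · have hrow : (⟨P+2, by omega⟩ : Fin (P+Q+3)).succAbove r = Fin.succ r := by
        apply Fin.succAbove_of_le_castSucc
        rw [Fin.le_def]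
        simpa using hr
      rw [hrow]
      simp only [Fin.val_succ]
      rw [if_neg (by omega), if_neg hr]
      congr 1
      push_cast
      ring
  · intro t _ ht
    have htne : (t:ℕ) ≠ P+2 := fun h => ht (Fin.ext (by simpa using h))
    have htb := t.isLt
    by_cases hlt : (t:ℕ) < P+2
    · have h0 : Big t (Fin.last (P+Q+2)) = 0 := by
        simp only [hBig, Matrix.of_apply, Fin.val_last]
        rw [if_pos trivial, if_pos hlt]
      rw [h0, mul_zero, zero_mul, Polynomial.coeff_zero]
    · have hent : Big t (Fin.last (P+Q+2)) = X^(P+Q+2-(t:ℕ)) := by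
        simp only [hBig, Matrix.of_apply, Fin.val_last]
        rw [if_pos trivial, if_neg hlt]
      rw [hent, hminor, coeff_term_aux]
      rw [if_neg (by omega)]
  · intro h
    exact absurd (Finset.mem_univ _) h

lemma RX_monic {ι : Type*} (a : ι → F) (S : Finset ι) : (RX a S).Monic :=
  Polynomial.monic_prod_of_monic _ _ (fun i _ => Polynomial.monic_X_sub_C (a i))

lemma RX_natDegree {ι : Type*} (a : ι → F) (S : Finset ι) : (RX a S).natDegree = S.card := by
  rw [RX, Polynomial.natDegree_prod_of_monic _ _ (fun i _ => Polynomial.monic_X_sub_C (a i))]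
  simp [Polynomial.natDegree_X_sub_C]

lemma coeffZ_top {f : F[X]} {d : ℕ} (hd : f.natDegree = d) :
    ∀ z : ℤ, (d:ℤ) < z → coeffZ f z = 0 := by
  intro z hz
  rw [coeffZ, if_pos (by omega)]
  apply Polynomial.coeff_eq_zero_of_natDegree_lt
  omega

lemma coeffZ_rel {f f1 : F[X]} {α : F} (hsplit : f = (Polynomial.X - Polynomial.C α) * f1) :
    ∀ z : ℤ, coeffZ f z = coeffZ f1 (z-1) - α * coeffZ f1 z := by
  intro z
  rcases lt_trichotomy z 0 with hz | hz | hz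
  · rw [coeffZ, coeffZ, coeffZ, if_neg (by omega), if_neg (by omega), if_neg (by omega)]
    ring
  · subst hz
    rw [coeffZ, coeffZ, coeffZ, if_pos le_rfl, if_neg (by omega), if_pos le_rfl]
    simp only [Int.toNat_zero]
    rw [hsplit, Polynomial.mul_coeff_zero]
    simp [Polynomial.coeff_X_zero]
  · obtain ⟨t, rfl⟩ : ∃ t : ℕ, z = (t:ℤ)+1 := ⟨(z-1).toNat, by omega⟩
    rw [coeffZ, coeffZ, coeffZ, if_pos (by omega), if_pos (by omega), if_pos (by omega)]
    have h1 : ((t:ℤ)+1).toNat = t+1 := by omega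
    have h2 : ((t:ℤ)+1-1).toNat = t := by omega
    rw [h1, h2, hsplit, sub_mul, Polynomial.coeff_sub, Polynomial.coeff_X_mul,
      Polynomial.coeff_C_mul]

end Helper

/-- for `1 ≤ k ≤ min(m,n) − 1` and `α = A i0` a root of `f`,
`G_k(f,g)(α) = (−1)^{m−k−1} coeff_{m−k−1}(G_{k−1}(f/(x−α), g))`, where `f/(x−α)` is the
exact quotient `∏_{i ≠ i0} (x − α_i)` and `G_{k−1}` is formed w.r.t. degrees `m−1` and `n`. -/
theorem Gk_eval_root_f {F : Type*} [Field F] {m n : ℕ} (hm : 1 ≤ m) (hn : 1 ≤ n)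
    (A : Fin m → F) (B : Fin n → F)
    (hA : Function.Injective A) (hB : Function.Injective B)
    (f g : Polynomial F) (hf : f = RX A Finset.univ) (hg : g = RX B Finset.univ)
    (k : ℕ) (hk1 : 1 ≤ k) (hk2 : k ≤ min m n - 1) (i0 : Fin m) :
    (Gk m n k f g).eval (A i0)
      = (-1 : F) ^ (m - k - 1)
          * (Gk (m - 1) n (k - 1) (RX A (Finset.univ.erase i0)) g).coeff (m - k - 1) := by
  obtain ⟨P, hP⟩ : ∃ P, n = k+P+1 := ⟨n-k-1, by omega⟩
  obtain ⟨Q, hQ⟩ : ∃ Q, m = k+Q+1 := ⟨m-k-1, by omega⟩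
  set α := A i0 with hα
  set f1 := RX A (Finset.univ.erase i0) with hf1
  have hf1deg : f1.natDegree = m-1 := by
    rw [hf1, RX_natDegree, Finset.card_erase_of_mem (Finset.mem_univ i0)]
    simp
  have hf1mon : f1.Monic := RX_monic _ _
  have hgdeg : g.natDegree = n := by
    rw [hg, RX_natDegree]
    simp
  have hsplitf : f = (Polynomial.X - Polynomial.C α) * f1 := by
    rw [hf, hf1, RX, RX, ← Finset.mul_prod_erase _ _ (Finset.mem_univ i0)]
  set Aa : ℤ → F := fun v => coeffZ f1 ((m:ℤ)-1+v) with hAa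
  set Bb : ℤ → F := fun v => coeffZ g ((n:ℤ)+v) with hBb
  have hA0 : ∀ v:ℤ, 0 < v → Aa v = 0 := fun v hv => coeffZ_top hf1deg _ (by omega)
  have hB0 : ∀ v:ℤ, 0 < v → Bb v = 0 := fun v hv => coeffZ_top hgdeg _ (by omega)
  have hA1 : Aa 0 = 1 := by
    have ht : ((m:ℤ)-1+0).toNat = m-1 := by omega
    rw [hAa]
    simp only
    rw [coeffZ, if_pos (by omega), ht, ← hf1deg]
    exact hf1mon.coeff_natDegree
  have hR := coeffZ_rel hsplitf
  have hsz1 : m + n - 2*k = P+Q+2 := by omega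
  have hsz2 : m - 1 + n - 2*(k-1) = P+Q+3 := by omega
  have hmk1 : m - k - 1 = Q := by omega
  -- identify the LHS
  have hL : (Gk m n k f g).eval α = (Matrix.of fun i j : Fin (P+Q+2) =>
      if (j:ℕ) = P+Q+1 then (if (i:ℕ) < P+1 then 0 else α^(P+Q+1-(i:ℕ)))
      else if (i:ℕ) < P+1 then
        (Aa (((i:ℕ):ℤ)-((j:ℕ):ℤ)) - α * Aa ((((i:ℕ):ℤ)-((j:ℕ):ℤ))+1))
      else Bb (((i:ℕ):ℤ)-((j:ℕ):ℤ)-(P+1))).det := by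
    rw [Gk, ← Polynomial.coe_evalRingHom, RingHom.map_det]
    rw [← Matrix.det_reindex_self (finCongr hsz1) ((Polynomial.evalRingHom α).mapMatrix
      (sresMG m n k f g))]
    congr 1
    ext i j
    have hi := i.isLt
    have hj := j.isLt
    simp only [Matrix.reindex_apply, Matrix.submatrix_apply, RingHom.mapMatrix_apply,
      Matrix.map_apply, Matrix.of_apply, finCongr_symm, finCongr_apply, Fin.coe_cast,
      Polynomial.coe_evalRingHom, sresMG, sresM]
    by_cases hjl : (j:ℕ) = P+Q+1
    · rw [if_pos (show (j:ℕ) = m+n-2*k-1 by omega), if_pos hjl]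
      by_cases hil : (i:ℕ) < P+1
      · rw [if_pos (by omega : (i:ℕ) < n-k), if_pos hil]
        simp
      · rw [if_neg (by omega : ¬ (i:ℕ) < n-k), if_neg hil]
        rw [Polynomial.eval_pow, Polynomial.eval_X,
          show m-k-1-((i:ℕ)-(n-k)) = P+Q+1-(i:ℕ) from by omega]
    · have hj2 : ¬ (j:ℕ) = m+n-2*k-1 := by omega
      rw [if_neg hj2, if_neg hj2, if_neg hjl]
      by_cases hil : (i:ℕ) < P+1
      · rw [if_pos (by omega : (i:ℕ) < n-k), if_pos hil]
        rw [Polynomial.eval_C, hR ((m:ℤ)+(i:ℕ)-(j:ℕ)),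
          show ((m:ℤ)+(i:ℕ)-(j:ℕ)-1) = (m:ℤ)-1+(((i:ℕ):ℤ)-((j:ℕ):ℤ)) from by ring,
          show ((m:ℤ)+(i:ℕ)-(j:ℕ)) = (m:ℤ)-1+(((i:ℕ):ℤ)-((j:ℕ):ℤ)+1) from by ring]
      · rw [if_neg (by omega : ¬ (i:ℕ) < n-k), if_neg hil]
        rw [Polynomial.eval_C,
          show ((k:ℤ)+(i:ℕ)-(j:ℕ)) = (n:ℤ)+(((i:ℕ):ℤ)-((j:ℕ):ℤ)-((P:ℤ)+1)) from by omega]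
  -- identify the RHS determinant
  have hRm : sresMG (m-1) n (k-1) f1 g
      = ((Matrix.of fun i j : Fin (P+Q+3) =>
        if (j:ℕ) = P+Q+2 then (if (i:ℕ) < P+2 then 0 else (Polynomial.X:F[X])^(P+Q+2-(i:ℕ)))
        else if (i:ℕ) < P+2 then Polynomial.C (Aa (((i:ℕ):ℤ)-((j:ℕ):ℤ)))
        else Polynomial.C (Bb (((i:ℕ):ℤ)-((j:ℕ):ℤ)-(P+2)))).submatrix
          (finCongr hsz2) (finCongr hsz2)) := by
    ext i j
    have hi := i.isLt
    have hj := j.isLt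
    simp only [Matrix.submatrix_apply, Matrix.of_apply, finCongr_apply, Fin.coe_cast,
      sresMG, sresM]
    by_cases hjl : (j:ℕ) = P+Q+2
    · rw [if_pos (show (j:ℕ) = m-1+n-2*(k-1)-1 by omega), if_pos hjl]
      by_cases hil : (i:ℕ) < P+2
      · rw [if_pos (by omega : (i:ℕ) < n-(k-1)), if_pos hil]
      · rw [if_neg (by omega : ¬ (i:ℕ) < n-(k-1)), if_neg hil,
          show m-1-(k-1)-1-((i:ℕ)-(n-(k-1))) = P+Q+2-(i:ℕ) from by omega]
    · have hj2 : ¬ (j:ℕ) = m-1+n-2*(k-1)-1 := by omega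
      rw [if_neg hj2, if_neg hj2, if_neg hjl]
      by_cases hil : (i:ℕ) < P+2
      · rw [if_pos (by omega : (i:ℕ) < n-(k-1)), if_pos hil,
          show (((m-1:ℕ):ℤ)+(i:ℕ)-(j:ℕ)) = (m:ℤ)-1+(((i:ℕ):ℤ)-((j:ℕ):ℤ)) from by omega]
      · rw [if_neg (by omega : ¬ (i:ℕ) < n-(k-1)), if_neg hil,
          show (((k-1:ℕ):ℤ)+(i:ℕ)-(j:ℕ)) = (n:ℤ)+(((i:ℕ):ℤ)-((j:ℕ):ℤ)-((P:ℤ)+2)) from by omega]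
  have hRdet : (Gk (m-1) n (k-1) f1 g).coeff (m-k-1)
      = (-1:F)^Q * (Matrix.of fun i j : Fin (P+Q+2) =>
        if (i:ℕ) < P+2 then Aa (((i:ℕ):ℤ)-((j:ℕ):ℤ))
        else Bb (((i:ℕ):ℤ)-((j:ℕ):ℤ)-(P+1))).det := by
    rw [Gk, hmk1, hRm, Matrix.det_submatrix_equiv_self (finCongr hsz2)]
    exact core3 P Q Aa Bb
  rw [hL, hRdet, hmk1, core2 P Q Aa Bb hA0 hA1 hB0,
    core1 P Q α Aa Bb hA0 hB0, ← mul_assoc, ← pow_add]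
  rw [Even.neg_one_pow ⟨Q, by ring⟩, one_mul]
end

section
/- Let 0 ≤ k < min(m,n) and let α be an entry of A (a root of f). Then Sres_k(f,g) evaluated at α equals coeff_k( Sres_k(f/(x−α), g) ) · g(α), where f/(x−α) is the exact quotient (monic of degree m−1), Sres_k(f/(x−α), g) is the k-th subresultant formed with respect to degrees m−1 and n, and coeff_k denotes the coefficient of x^k. -/
open Polynomial Finset

open Polynomial Finset Matrix

section Helpers

variable {F : Type*} [Field F]

/-- coeffZ basic: negative index. -/
lemma coeffZ_neg {f : Polynomial F} {z : ℤ} (h : z < 0) : coeffZ f z = 0 := by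
  simp [coeffZ, not_le.mpr h]

lemma coeffZ_nonneg (f : Polynomial F) {z : ℤ} (h : 0 ≤ z) : coeffZ f z = f.coeff z.toNat := by
  simp [coeffZ, h]

lemma coeffZ_eq_zero_of_natDegree_lt {f : Polynomial F} {d : ℕ} (hd : f.natDegree ≤ d)
    {z : ℤ} (h : (d : ℤ) < z) : coeffZ f z = 0 := by
  have h0 : (0:ℤ) ≤ z := by omega
  rw [coeffZ_nonneg f h0]
  apply Polynomial.coeff_eq_zero_of_natDegree_lt
  omega

lemma coeffZ_linear_mul (α : F) (p : Polynomial F) (z : ℤ) :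
    coeffZ ((X - C α) * p) z = coeffZ p (z - 1) - α * coeffZ p z := by
  rcases lt_or_ge z 0 with h | h
  · rw [coeffZ_neg h, coeffZ_neg (by omega), coeffZ_neg h]; ring
  · rw [coeffZ_nonneg _ h]
    have : (X - C α) * p = X * p - C α * p := by ring
    rw [this, Polynomial.coeff_sub, Polynomial.coeff_C_mul]
    rcases eq_or_lt_of_le h with h0 | h1
    · have hz : z = 0 := h0.symm
      subst hz
      rw [coeffZ_neg (by norm_num), coeffZ_nonneg _ le_rfl]
      simp [Polynomial.coeff_X_mul_zero]
    · have hz : z.toNat = (z - 1).toNat + 1 := by omega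
      rw [hz, Polynomial.coeff_X_mul, coeffZ_nonneg _ (by omega), coeffZ_nonneg _ h]
      rw [← hz]

/-- Upper shift matrix: identity plus entries `c i` at `(i, i+1)`. -/
def shiftU (N : ℕ) (c : Fin N → F) : Matrix (Fin N) (Fin N) F :=
  Matrix.of fun i t => (if t = i then (1 : F) else 0) + (if (t : ℕ) = (i : ℕ) + 1 then c i else 0)

lemma shiftU_det (N : ℕ) (c : Fin N → F) : (shiftU N c).det = 1 := by
  have h : (shiftU N c).BlockTriangular id := by
    intro i j hij
    simp only [id] at hij
    have h1 : j ≠ i := ne_of_lt hij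
    have h2 : (j : ℕ) ≠ (i : ℕ) + 1 := by
      have := Fin.lt_iff_val_lt_val.mp hij; omega
    simp [shiftU, h1, h2]
  rw [Matrix.det_of_upperTriangular h]
  apply Finset.prod_eq_one
  intro i _
  simp [shiftU]

lemma shiftU_mul_apply {N : ℕ} (c : Fin N → F) (M : Matrix (Fin N) (Fin N) F)
    (i j : Fin N) :
    (shiftU N c * M) i j
      = M i j + (if h : (i : ℕ) + 1 < N then c i * M ⟨(i : ℕ) + 1, h⟩ j else 0) := by
  rw [Matrix.mul_apply]
  simp only [shiftU, Matrix.of_apply, add_mul, Finset.sum_add_distrib]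
  congr 1
  · rw [show (∑ t, (if t = i then (1:F) else 0) * M t j) = ∑ t, (if t = i then M t j else 0) by
      apply Finset.sum_congr rfl; intro t _; split <;> simp]
    rw [Finset.sum_ite_eq' Finset.univ i (fun t => M t j)]
    simp
  · split
    · rename_i h
      rw [Finset.sum_eq_single (⟨(i:ℕ)+1, h⟩ : Fin N)]
      · simp
      · intro t _ ht
        have : (t : ℕ) ≠ (i : ℕ) + 1 := fun hc => ht (Fin.ext hc)
        simp [this]
      · simp
    · rename_i h
      apply Finset.sum_eq_zero
      intro t _
      have : (t : ℕ) ≠ (i : ℕ) + 1 := by have := t.isLt; omega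
      simp [this]

lemma mul_shiftU_apply {N : ℕ} (c : Fin N → F) (M : Matrix (Fin N) (Fin N) F)
    (i j : Fin N) :
    (M * shiftU N c) i j
      = M i j + (if h : 1 ≤ (j : ℕ) then
          c ⟨(j : ℕ) - 1, by have := j.isLt; omega⟩ * M i ⟨(j : ℕ) - 1, by have := j.isLt; omega⟩
        else 0) := by
  rw [Matrix.mul_apply]
  simp only [shiftU, Matrix.of_apply, mul_add, Finset.sum_add_distrib]
  congr 1
  · rw [show (∑ t, M i t * (if j = t then (1:F) else 0)) = ∑ t, (if t = j then M i t else 0) by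
      apply Finset.sum_congr rfl; intro t _
      rcases eq_or_ne t j with h | h
      · subst h; simp
      · simp [h, Ne.symm h]]
    rw [Finset.sum_ite_eq' Finset.univ j (fun t => M i t)]
    simp
  · split
    · rename_i h
      have hlt : (j : ℕ) - 1 < N := by have := j.isLt; omega
      rw [Finset.sum_eq_single (⟨(j:ℕ)-1, hlt⟩ : Fin N)]
      · have h1 : j ≠ (⟨(j:ℕ)-1, hlt⟩ : Fin N) := by
          intro hc; have := congrArg Fin.val hc; simp at this; omega
        have h2 : (j : ℕ) = ((⟨(j:ℕ)-1, hlt⟩ : Fin N) : ℕ) + 1 := by simp; omega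
        rw [if_pos h2]; exact mul_comm _ _
      · intro t _ ht
        have : (j : ℕ) ≠ (t : ℕ) + 1 := by
          intro hc
          apply ht; apply Fin.ext; simp; omega
        simp [this]
      · simp
    · rename_i h
      apply Finset.sum_eq_zero
      intro t _
      have : (j : ℕ) ≠ (t : ℕ) + 1 := by omega
      simp [this]

lemma det_updateCol_finset_sum {R : Type*} [CommRing R] {N : Type*} [DecidableEq N] [Fintype N]
    (W : Matrix N N R) (j0 : N) (s : Finset ℕ) (v : ℕ → N → R) :
    (W.updateCol j0 (fun i => ∑ ℓ ∈ s, v ℓ i)).det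
      = ∑ ℓ ∈ s, (W.updateCol j0 (v ℓ)).det := by
  classical
  induction s using Finset.induction_on with
  | empty =>
      simp only [Finset.sum_empty]
      exact Matrix.det_eq_zero_of_column_eq_zero j0 (fun i => by
        simp [Matrix.updateCol_apply])
  | insert _ _ h ih =>
      rename_i a s'
      rw [Finset.sum_insert h]
      have : (fun i => ∑ ℓ ∈ insert a s', v ℓ i)
          = (v a) + (fun i => ∑ ℓ ∈ s', v ℓ i) := by
        funext i; simp [Finset.sum_insert h]
      rw [this, Matrix.det_updateCol_add, ih]

lemma abstract_det (m n k : ℕ) (hkm : k < m) (hkn : k < n)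
    (α : F) (a a' b : ℤ → F)
    (ha : ∀ z : ℤ, a z = a' (z - 1) - α * a' z)
    (ha' : ∀ z : ℤ, (m : ℤ) ≤ z → a' z = 0)
    (hb : ∀ z : ℤ, (n : ℤ) < z → b z = 0) :
    (Matrix.of fun i j : Fin (m + n - 2*k - 1 + 1) =>
        if (j : ℕ) = m + n - 2*k - 1 then
          (if (i : ℕ) < n - k then (0:F) else α ^ (m + n - 2*k - 1 - (i : ℕ)))
        else if (i : ℕ) < n - k then a ((m : ℤ) + (i:ℕ) - (j:ℕ))
        else b ((k : ℤ) + (i:ℕ) - (j:ℕ))).det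
      = (Matrix.of fun i j : Fin (m + n - 2*k - 1) =>
          if (i : ℕ) < n - k then a' ((m : ℤ) - 1 + (i:ℕ) - (j:ℕ))
          else b ((k : ℤ) + (i:ℕ) - (j:ℕ))).det := by
  set N' := m + n - 2*k - 1 with hN'
  set q := n - k with hq
  have hq1 : 1 ≤ q := by omega
  have hqN : q ≤ N' := by omega
  have h1N : 1 ≤ N' := by omega
  set M' : Matrix (Fin (N'+1)) (Fin (N'+1)) F := Matrix.of fun i j =>
      if (j : ℕ) = N' then
        (if (i : ℕ) < q then (0:F) else α ^ (N' - (i : ℕ)))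
      else if (i : ℕ) < q then a ((m : ℤ) + (i:ℕ) - (j:ℕ))
      else b ((k : ℤ) + (i:ℕ) - (j:ℕ)) with hM'
  set T : Matrix (Fin N') (Fin N') F := Matrix.of fun i j =>
      if (i:ℕ) < q then a' ((m:ℤ) - 1 + (i:ℕ) - (j:ℕ))
      else b ((k:ℤ) + (i:ℕ) - (j:ℕ)) with hT
  show M'.det = T.det
  set c : Fin (N'+1) → F := fun i => if q ≤ (i:ℕ) then -α else 0 with hc
  have key : (shiftU (N'+1) c * M').det = M'.det := by
    rw [Matrix.det_mul, shiftU_det, one_mul]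
  rw [← key]
  have hM'last : ∀ t : Fin (N'+1), M' t (Fin.last N')
      = if (t:ℕ) < q then 0 else α ^ (N' - (t:ℕ)) := by
    intro t
    simp [hM', Matrix.of_apply, Fin.val_last]
  have hcol : ∀ i : Fin (N'+1), (shiftU (N'+1) c * M') i (Fin.last N')
      = if i = Fin.last N' then 1 else 0 := by
    intro i
    rw [shiftU_mul_apply, hM'last]
    rcases eq_or_ne i (Fin.last N') with hi | hi
    · subst hi
      rw [if_pos rfl]
      rw [if_neg (by simp only [Fin.val_last]; omega)]
      rw [dif_neg (by simp only [Fin.val_last]; omega)]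
      simp [Fin.val_last]
    · have hiv : (i:ℕ) < N' := by
        have h2 := i.isLt
        rcases lt_or_eq_of_le (Nat.lt_succ_iff.mp h2) with h | h
        · exact h
        · exact absurd (Fin.ext (h.trans (Fin.val_last N').symm)) hi
      rw [if_neg hi, dif_pos (by omega : (i:ℕ) + 1 < N' + 1)]
      rw [hM'last]
      simp only [hc]
      rcases lt_or_ge (i:ℕ) q with h | h
      · rw [if_pos h, if_neg (by omega : ¬ q ≤ (i:ℕ))]
        simp
      · rw [if_neg (not_lt.mpr h), if_pos h,
          if_neg (by simp only []; omega : ¬ ((⟨(i:ℕ)+1, by omega⟩ : Fin (N'+1)) : ℕ) < q)]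
        have he : N' - (i:ℕ) = (N' - (((⟨(i:ℕ)+1, by omega⟩ : Fin (N'+1)) : ℕ))) + 1 := by
          simp only []; omega
        rw [he, pow_succ]
        ring
  rw [Matrix.det_succ_column (shiftU (N'+1) c * M') (Fin.last N')]
  rw [Finset.sum_eq_single (Fin.last N') (fun i _ hi => by rw [hcol i, if_neg hi]; ring)
    (fun h => absurd (Finset.mem_univ _) h)]
  rw [hcol, if_pos rfl, mul_one]
  have hsign : ((-1:F)) ^ ((Fin.last N' : ℕ) + (Fin.last N' : ℕ)) = 1 :=
    Even.neg_one_pow ⟨N', by simp [Fin.val_last]⟩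
  rw [hsign, one_mul]
  set S : Matrix (Fin N') (Fin N') F := Matrix.of fun i j =>
      if (i:ℕ) < q then a ((m:ℤ) + (i:ℕ) - (j:ℕ))
      else b ((k:ℤ) + (i:ℕ) - (j:ℕ)) - α * b ((k:ℤ) + 1 + (i:ℕ) - (j:ℕ)) with hS
  have hminor : (shiftU (N'+1) c * M').submatrix
      (Fin.last N').succAbove (Fin.last N').succAbove = S := by
    funext i j
    rw [Matrix.submatrix_apply, Fin.succAbove_last, shiftU_mul_apply]
    have hjn : ¬ ((j:ℕ) = N') := Nat.ne_of_lt j.isLt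
    simp only [hM', hS, hc, Matrix.of_apply, Fin.coe_castSucc]
    rw [dif_pos (show (i:ℕ) + 1 < N' + 1 by omega)]
    simp only [if_neg hjn]
    rcases lt_or_ge (i:ℕ) q with h | h
    · rw [if_pos h, if_pos h, if_neg (by omega : ¬ q ≤ (i:ℕ))]
      ring
    · rw [if_neg (not_lt.mpr h), if_neg (not_lt.mpr h), if_pos h,
        if_neg (by omega : ¬ (i:ℕ) + 1 < q)]
      have he : (k:ℤ) + (((i:ℕ) + 1 : ℕ) : ℤ) - ((j:ℕ) : ℤ)
          = (k:ℤ) + 1 + ((i:ℕ) : ℤ) - ((j:ℕ) : ℤ) := by push_cast; ring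
      rw [he]
      ring
  rw [hminor]
  have key2 : S = T * shiftU N' (fun _ => -α) := by
    funext i j
    rw [mul_shiftU_apply]
    simp only [hS, hT, Matrix.of_apply]
    rcases lt_or_ge (i:ℕ) q with hi | hi
    · simp only [if_pos hi]
      split
      · rename_i hj
        rw [ha ((m:ℤ) + ((i:ℕ):ℤ) - ((j:ℕ):ℤ))]
        have e1 : (m:ℤ) + ((i:ℕ):ℤ) - ((j:ℕ):ℤ) - 1 = (m:ℤ) - 1 + ((i:ℕ):ℤ) - ((j:ℕ):ℤ) := by
          ring
        have e2 : (m:ℤ) - 1 + ((i:ℕ):ℤ) - ((((j:ℕ) - 1 : ℕ)) : ℤ)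
            = (m:ℤ) + ((i:ℕ):ℤ) - ((j:ℕ):ℤ) := by omega
        rw [e1, e2]
        ring
      · rename_i hj
        rw [ha ((m:ℤ) + ((i:ℕ):ℤ) - ((j:ℕ):ℤ)),
          ha' ((m:ℤ) + ((i:ℕ):ℤ) - ((j:ℕ):ℤ)) (by omega)]
        have e1 : (m:ℤ) + ((i:ℕ):ℤ) - ((j:ℕ):ℤ) - 1 = (m:ℤ) - 1 + ((i:ℕ):ℤ) - ((j:ℕ):ℤ) := by
          ring
        rw [e1]
        ring
    · simp only [if_neg (not_lt.mpr hi)]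
      split
      · rename_i hj
        have e1 : (k:ℤ) + ((i:ℕ):ℤ) - ((((j:ℕ) - 1 : ℕ)) : ℤ)
            = (k:ℤ) + 1 + ((i:ℕ):ℤ) - ((j:ℕ):ℤ) := by omega
        rw [e1]
        ring
      · rename_i hj
        rw [hb ((k:ℤ) + 1 + ((i:ℕ):ℤ) - ((j:ℕ):ℤ)) (by omega)]
        ring
  rw [key2, Matrix.det_mul, shiftU_det, mul_one]

end Helpers

/-- for `0 ≤ k < min(m,n)` and `α = A i0` a root of `f`,
`Sres_k(f,g)(α) = coeff_k(Sres_k(f/(x−α), g)) · g(α)`, where `f/(x−α)` is the exact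
quotient `∏_{i ≠ i0} (x − α_i)` and `Sres_k` on the right is formed w.r.t.
degrees `m−1` and `n`. -/
theorem Sres_eval_root_f {F : Type*} [Field F] {m n : ℕ} (hm : 1 ≤ m) (hn : 1 ≤ n)
    (A : Fin m → F) (B : Fin n → F)
    (hA : Function.Injective A) (hB : Function.Injective B)
    (f g : Polynomial F) (hf : f = RX A Finset.univ) (hg : g = RX B Finset.univ)
    (k : ℕ) (hk : k < min m n) (i0 : Fin m) :
    (Sres m n k f g).eval (A i0)
      = (Sres (m - 1) n k (RX A (Finset.univ.erase i0)) g).coeff k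
          * g.eval (A i0) := by
  classical
  have hkm : k < m := lt_of_lt_of_le hk (min_le_left m n)
  have hkn : k < n := lt_of_lt_of_le hk (min_le_right m n)
  set α := A i0 with hα
  set f1 : Polynomial F := RX A (Finset.univ.erase i0) with hf1def
  have hff1 : f = (X - C α) * f1 := by
    rw [hf, hf1def, RX, RX]
    exact (Finset.mul_prod_erase Finset.univ _ (Finset.mem_univ i0)).symm
  have hfα : f.eval α = 0 := by
    rw [hff1]; simp
  have hdf1 : f1.natDegree ≤ m - 1 := by
    refine le_trans (Polynomial.natDegree_prod_le _ _) ?_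
    simp only [Polynomial.natDegree_X_sub_C]
    rw [Finset.sum_const, smul_eq_mul, mul_one,
      Finset.card_erase_of_mem (Finset.mem_univ i0)]
    simp
  have hdg : g.natDegree ≤ n := by
    rw [hg, RX]
    refine le_trans (Polynomial.natDegree_prod_le _ _) ?_
    simp [Polynomial.natDegree_X_sub_C]
  have ha : ∀ z : ℤ, coeffZ f z = coeffZ f1 (z - 1) - α * coeffZ f1 z := by
    intro z; rw [hff1]; exact coeffZ_linear_mul α f1 z
  have ha' : ∀ z : ℤ, (m:ℤ) ≤ z → coeffZ f1 z = 0 := fun z hz =>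
    coeffZ_eq_zero_of_natDegree_lt hdf1 (by omega)
  have hb : ∀ z : ℤ, (n:ℤ) < z → coeffZ g z = 0 := fun z hz =>
    coeffZ_eq_zero_of_natDegree_lt hdg hz
  have key := abstract_det m n k hkm hkn α (coeffZ f) (coeffZ f1) (coeffZ g) ha ha' hb
  have hNN : m + n - 2*k = (m + n - 2*k - 1) + 1 := by omega
  set MA : Matrix (Fin (m + n - 2*k - 1 + 1)) (Fin (m + n - 2*k - 1 + 1)) F :=
    Matrix.of fun i j =>
      if (j : ℕ) = m + n - 2*k - 1 then
        (if (i : ℕ) < n - k then (0:F) else α ^ (m + n - 2*k - 1 - (i : ℕ)))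
      else if (i : ℕ) < n - k then coeffZ f ((m : ℤ) + (i:ℕ) - (j:ℕ))
      else coeffZ g ((k : ℤ) + (i:ℕ) - (j:ℕ)) with hMA
  set TA : Matrix (Fin (m + n - 2*k - 1)) (Fin (m + n - 2*k - 1)) F :=
    Matrix.of fun i j =>
      if (i : ℕ) < n - k then coeffZ f1 ((m : ℤ) - 1 + (i:ℕ) - (j:ℕ))
      else coeffZ g ((k : ℤ) + (i:ℕ) - (j:ℕ)) with hTA
  -- LHS computation
  have lhs_eq : (Sres m n k f g).eval α = g.eval α * TA.det := by
    have e1 : Sres m n k f g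
        = (Matrix.of (fun i j : Fin (m + n - 2*k - 1 + 1) =>
            sresM m n k f g (Fin.cast hNN.symm i) (Fin.cast hNN.symm j))).det := by
      rw [Sres]
      exact (Matrix.det_submatrix_equiv_self (finCongr hNN.symm) (sresM m n k f g)).symm
    rw [e1]
    have e2 : ((Matrix.of (fun i j : Fin (m + n - 2*k - 1 + 1) =>
          sresM m n k f g (Fin.cast hNN.symm i) (Fin.cast hNN.symm j))).det).eval α
        = ((Polynomial.evalRingHom α).mapMatrix
            (Matrix.of (fun i j : Fin (m + n - 2*k - 1 + 1) =>
              sresM m n k f g (Fin.cast hNN.symm i) (Fin.cast hNN.symm j)))).det := by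
      rw [← Polynomial.coe_evalRingHom, RingHom.map_det]
    rw [e2]
    have hmap : (Polynomial.evalRingHom α).mapMatrix
          (Matrix.of (fun i j : Fin (m + n - 2*k - 1 + 1) =>
            sresM m n k f g (Fin.cast hNN.symm i) (Fin.cast hNN.symm j)))
        = MA.updateCol (Fin.last (m + n - 2*k - 1))
            ((g.eval α) • fun i => MA i (Fin.last (m + n - 2*k - 1))) := by
      funext i j
      simp only [RingHom.mapMatrix_apply, Matrix.map_apply, Matrix.of_apply,
        Matrix.updateCol_apply, sresM, Fin.coe_cast, hMA, Pi.smul_apply, smul_eq_mul,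
        Polynomial.coe_evalRingHom, Fin.val_last]
      rcases eq_or_ne (j : ℕ) (m + n - 2*k - 1) with hj | hj
      · have hjl : j = Fin.last (m + n - 2*k - 1) := Fin.ext (by simpa using hj)
        rw [if_pos hj, if_pos hjl, if_pos trivial]
        rcases lt_or_ge (i:ℕ) (n - k) with hi | hi
        · rw [if_pos hi, if_pos hi]
          simp [hfα]
        · rw [if_neg (not_lt.mpr hi), if_neg (not_lt.mpr hi)]
          have hib : (i : ℕ) ≤ m + n - 2*k - 1 := by
            have := i.isLt; omega
          have hexp : m - k - 1 - ((i:ℕ) - (n - k)) = m + n - 2*k - 1 - (i:ℕ) := by omega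
          simp [hexp, mul_comm]
      · have hjl : j ≠ Fin.last (m + n - 2*k - 1) := by
          intro hc; exact hj (by rw [hc]; simp)
        rw [if_neg hj, if_neg hjl, if_neg hj]
        rcases lt_or_ge (i:ℕ) (n - k) with hi | hi
        · rw [if_pos hi, if_pos hi]; simp
        · rw [if_neg (not_lt.mpr hi), if_neg (not_lt.mpr hi)]; simp
    rw [hmap, Matrix.det_updateCol_smul, Matrix.updateCol_eq_self, key]
  -- RHS computation
  have hN2 : (m - 1) + n - 2*k = m + n - 2*k - 1 := by omega
  have hjl_lt : m + n - 2*k - 2 < m + n - 2*k - 1 := by omega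
  set jl : Fin (m + n - 2*k - 1) := ⟨m + n - 2*k - 2, hjl_lt⟩ with hjl
  have hjlv : (jl : ℕ) = m + n - 2*k - 2 := rfl
  set v : Fin (m + n - 2*k - 1) → Polynomial F := fun i =>
    sresM (m-1) n k f1 g (Fin.cast hN2.symm i) (Fin.cast hN2.symm jl) with hv
  have rhs_eq : (Sres (m-1) n k f1 g).coeff k = TA.det := by
    have e3 : Sres (m-1) n k f1 g
        = (Matrix.of (fun i j : Fin (m + n - 2*k - 1) =>
            sresM (m-1) n k f1 g (Fin.cast hN2.symm i) (Fin.cast hN2.symm j))).det := by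
      rw [Sres]
      exact (Matrix.det_submatrix_equiv_self (finCongr hN2.symm) (sresM (m-1) n k f1 g)).symm
    have c4 : (Matrix.of (fun i j : Fin (m + n - 2*k - 1) =>
          sresM (m-1) n k f1 g (Fin.cast hN2.symm i) (Fin.cast hN2.symm j)))
        = (TA.map C).updateCol jl v := by
      funext i j
      simp only [Matrix.of_apply, Matrix.updateCol_apply, Matrix.map_apply, hTA, hv]
      rcases eq_or_ne j jl with hj | hj
      · subst hj; rw [if_pos rfl]
      · rw [if_neg hj]
        have hjv : (j:ℕ) ≠ (m-1) + n - 2*k - 1 := by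
          intro hc
          apply hj
          apply Fin.ext
          omega
        simp only [sresM, Fin.coe_cast]
        rw [if_neg hjv]
        rcases lt_or_ge (i:ℕ) (n - k) with hi | hi
        · rw [if_pos hi, if_pos hi]
          congr 2
          omega
        · rw [if_neg (not_lt.mpr hi), if_neg (not_lt.mpr hi)]
    have hvdeg : ∀ i, (v i).natDegree < m + n + 1 := by
      intro i
      simp only [hv, sresM, Fin.coe_cast]
      rw [if_pos (show ((jl:ℕ) = (m-1) + n - 2*k - 1) by omega)]
      rcases lt_or_ge (i:ℕ) (n - k) with hi | hi
      · rw [if_pos hi]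
        refine lt_of_le_of_lt (Polynomial.natDegree_mul_le) ?_
        have h1 : (X ^ (n - k - 1 - (i:ℕ)) : Polynomial F).natDegree ≤ n :=
          le_trans (Polynomial.natDegree_X_pow_le _) (by omega)
        omega
      · rw [if_neg (not_lt.mpr hi)]
        refine lt_of_le_of_lt (Polynomial.natDegree_mul_le) ?_
        have h1 : (X ^ ((m-1) - k - 1 - ((i:ℕ) - (n - k))) : Polynomial F).natDegree ≤ m :=
          le_trans (Polynomial.natDegree_X_pow_le _) (by omega)
        omega
    have c5 : ((TA.map C).updateCol jl v).det
        = ∑ ℓ ∈ Finset.range (m + n + 1),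
            ((TA.map C).updateCol jl
              (fun i => Polynomial.monomial ℓ ((v i).coeff ℓ))).det := by
      have hveq : v = (fun i => ∑ ℓ ∈ Finset.range (m + n + 1),
          Polynomial.monomial ℓ ((v i).coeff ℓ)) :=
        funext fun i => Polynomial.as_sum_range' _ _ (hvdeg i)
      conv_lhs => rw [hveq]
      exact det_updateCol_finset_sum _ _ _ _
    have c6 : ∀ ℓ, ((TA.map C).updateCol jl
          (fun i => Polynomial.monomial ℓ ((v i).coeff ℓ))).det
        = X ^ ℓ * C ((TA.updateCol jl (fun i => (v i).coeff ℓ)).det) := by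
      intro ℓ
      have h1 : (fun i => Polynomial.monomial ℓ ((v i).coeff ℓ))
          = (X ^ ℓ : Polynomial F) • (fun i => C ((v i).coeff ℓ)) := by
        funext i
        rw [Pi.smul_apply, smul_eq_mul, mul_comm, Polynomial.C_mul_X_pow_eq_monomial]
      rw [h1, Matrix.det_updateCol_smul]
      congr 1
      have h2 : (TA.map C).updateCol jl (fun i => C ((v i).coeff ℓ))
          = (TA.updateCol jl (fun i => (v i).coeff ℓ)).map C := by
        funext i j
        simp only [Matrix.map_apply, Matrix.updateCol_apply]
        split <;> rfl
      rw [h2, ← RingHom.mapMatrix_apply, ← RingHom.map_det]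
    have c7 : TA.updateCol jl (fun i => (v i).coeff k) = TA := by
      have hcol : ∀ i, (v i).coeff k = TA i jl := by
        intro i
        simp only [hv, hTA, sresM, Fin.coe_cast, Matrix.of_apply]
        rw [if_pos (show ((jl:ℕ) = (m-1) + n - 2*k - 1) by omega)]
        rcases lt_or_ge (i:ℕ) (n - k) with hi | hi
        · rw [if_pos hi, if_pos hi, Polynomial.X_pow_mul, Polynomial.coeff_mul_X_pow']
          rcases le_or_gt (n - k - 1 - (i:ℕ)) k with hle | hlt
          · rw [if_pos hle, coeffZ_nonneg _ (by omega)]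
            congr 1
            omega
          · rw [if_neg (not_le.mpr hlt), coeffZ_neg (by omega)]
        · rw [if_neg (not_lt.mpr hi), if_neg (not_lt.mpr hi),
            Polynomial.X_pow_mul, Polynomial.coeff_mul_X_pow']
          rcases le_or_gt ((m-1) - k - 1 - ((i:ℕ) - (n - k))) k with hle | hlt
          · rw [if_pos hle, coeffZ_nonneg _ (by have := i.isLt; omega)]
            congr 1
            have := i.isLt
            omega
          · rw [if_neg (not_le.mpr hlt), coeffZ_neg (by have := i.isLt; omega)]
      funext i j
      rw [Matrix.updateCol_apply]
      rcases eq_or_ne j jl with hj | hj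
      · subst hj; rw [if_pos rfl, hcol]
      · rw [if_neg hj]
    rw [e3, c4, c5, Polynomial.finset_sum_coeff]
    have c8 : ∀ ℓ ∈ Finset.range (m + n + 1),
        (((TA.map C).updateCol jl
          (fun i => Polynomial.monomial ℓ ((v i).coeff ℓ))).det).coeff k
        = if ℓ = k then (TA.updateCol jl (fun i => (v i).coeff ℓ)).det else 0 := by
      intro ℓ _
      rw [c6, mul_comm, Polynomial.C_mul_X_pow_eq_monomial, Polynomial.coeff_monomial]
    rw [Finset.sum_congr rfl c8, Finset.sum_ite_eq' (Finset.range (m + n + 1)) k]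
    rw [if_pos (Finset.mem_range.mpr (by omega))]
    rw [c7]
  rw [lhs_eq, rhs_eq, mul_comm]
end
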